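/- arXiv:2404.05529 — 5 statements merged into one kernel-verified Lean document; each statement's English description precedes it below -/
import Mathlib

section
/- For any finite simple graph G with m edges, the second Zagreb coindex satisfies \overline{M_2}(G) = 2m^2 - \frac{1}{2} M_1(G) - M_2(G). -/
open scoped Classical
open Finset

noncomputable section

namespace Zagreb

variable {V : Type*}

/-- First Zagreb index. -/
def M1 (G : SimpleGraph V) [Fintype V] : ℕ :=
  ∑ v, (G.degree v) ^ 2

/-- Second Zagreb index. -/
def M2 (G : SimpleGraph V) [Fintype V] : ℕ :=
  ∑ e ∈ G.edgeFinset,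
    Sym2.lift ⟨fun u v => G.degree u * G.degree v, fun _ _ => mul_comm _ _⟩ e

/-- First Zagreb coindex: sum over unordered pairs of distinct non-adjacent vertices. -/
def M1bar (G : SimpleGraph V) [Fintype V] : ℕ :=
  ∑ e ∈ Gᶜ.edgeFinset,
    Sym2.lift ⟨fun u v => G.degree u + G.degree v, fun _ _ => add_comm _ _⟩ e

/-- Second Zagreb coindex. -/
def M2bar (G : SimpleGraph V) [Fintype V] : ℕ :=
  ∑ e ∈ Gᶜ.edgeFinset,
    Sym2.lift ⟨fun u v => G.degree u * G.degree v, fun _ _ => mul_comm _ _⟩ e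

/-- The cycle-star graph: a cycle of length `k` together with `l` leaves
attached to the cycle vertex `0`. -/
def cycleStar (k l : ℕ) : SimpleGraph (Fin k ⊕ Fin l) where
  Adj x y :=
    match x, y with
    | Sum.inl i, Sum.inl j => i ≠ j ∧ ((i.val + 1) % k = j.val ∨ (j.val + 1) % k = i.val)
    | Sum.inl i, Sum.inr _ => i.val = 0
    | Sum.inr _, Sum.inl i => i.val = 0
    | Sum.inr _, Sum.inr _ => False
  symm := by
    constructor
    rintro (i | a) (j | b) h
    · exact ⟨Ne.symm h.1, h.2.symm⟩
    · exact h
    · exact h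
    · exact h
  loopless := by
    constructor
    rintro (i | a) h
    · exact h.1 rfl
    · exact h

/-- The subdivision graph: each edge is replaced by a path of length 2. -/
def subdivision (G : SimpleGraph V) : SimpleGraph (V ⊕ G.edgeSet) where
  Adj x y :=
    match x, y with
    | Sum.inl v, Sum.inr e => v ∈ (e : Sym2 V)
    | Sum.inr e, Sum.inl v => v ∈ (e : Sym2 V)
    | _, _ => False
  symm := by constructor; rintro (v | e) (w | f) h <;> simp_all
  loopless := by constructor; rintro (v | e) h <;> simp_all

/-- The line graph of `G`. -/
def lineGraph (G : SimpleGraph V) : SimpleGraph G.edgeSet where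
  Adj e f := e ≠ f ∧ ∃ v, v ∈ (e : Sym2 V) ∧ v ∈ (f : Sym2 V)
  symm := by
    constructor
    rintro e f ⟨hne, v, hv1, hv2⟩
    exact ⟨hne.symm, v, hv2, hv1⟩
  loopless := by constructor; rintro e ⟨hne, _⟩; exact hne rfl

/-- A cut-vertex: a vertex of a connected graph whose removal disconnects it. -/
def IsCutVertex (G : SimpleGraph V) (v : V) : Prop :=
  G.Connected ∧ ¬ (G.induce {u | u ≠ v}).Connected

/-- The line cut-vertex graph of `G`: vertices are the edges and cut-vertices of `G`;
two vertices are adjacent iff the corresponding edges share an endpoint, or one is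
an edge incident to the other, a cut-vertex. -/
def lineCutGraph (G : SimpleGraph V) :
    SimpleGraph (G.edgeSet ⊕ {v : V // IsCutVertex G v}) where
  Adj x y :=
    match x, y with
    | Sum.inl e, Sum.inl f => e ≠ f ∧ ∃ v, v ∈ (e : Sym2 V) ∧ v ∈ (f : Sym2 V)
    | Sum.inl e, Sum.inr c => (c : V) ∈ (e : Sym2 V)
    | Sum.inr c, Sum.inl e => (c : V) ∈ (e : Sym2 V)
    | Sum.inr _, Sum.inr _ => False
  symm := by
    constructor
    rintro (e | c) (f | d) h
    · exact ⟨Ne.symm h.1, h.2.choose, h.2.choose_spec.2, h.2.choose_spec.1⟩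
    · exact h
    · exact h
    · exact h
  loopless := by
    constructor
    rintro (e | c) h
    · exact h.1 rfl
    · exact h

end Zagreb

section Aux

variable {V : Type*} [Fintype V]

/-- Rational degree-product function on unordered pairs. -/
private noncomputable def Dq (G : SimpleGraph V) : Sym2 V → ℚ :=
  Sym2.lift ⟨fun u v => (G.degree u : ℚ) * G.degree v, fun _ _ => mul_comm _ _⟩

private lemma sum_edge_eq (G H : SimpleGraph V) [Fintype H.edgeSet] :
    (∑ e ∈ H.edgeFinset, Dq G e) * 2 =
      ∑ p ∈ (univ : Finset (V × V)).filter (fun p => H.Adj p.1 p.2),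
        (G.degree p.1 : ℚ) * G.degree p.2 := by
  classical
  have h1 : ∀ p : V × V, (G.degree p.1 : ℚ) * G.degree p.2 = Dq G (Sym2.mk.uncurry p) := by
    rintro ⟨a, b⟩; rfl
  rw [Finset.sum_congr rfl fun p _ => h1 p, Finset.sum_comp (Dq G) Sym2.mk.uncurry]
  have himg : ((univ : Finset (V × V)).filter (fun p => H.Adj p.1 p.2)).image Sym2.mk.uncurry
      = H.edgeFinset := by
    ext e
    induction e using Sym2.ind with
    | _ x y =>
      simp only [Finset.mem_image, Finset.mem_filter, Finset.mem_univ, true_and,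
        SimpleGraph.mem_edgeFinset, SimpleGraph.mem_edgeSet, Prod.exists, Function.uncurry_apply_pair]
      constructor
      · rintro ⟨a, b, hab, heq⟩
        rw [Sym2.eq_iff] at heq
        rcases heq with ⟨rfl, rfl⟩ | ⟨rfl, rfl⟩
        · exact hab
        · exact hab.symm
      · intro h; exact ⟨x, y, h, rfl⟩
  rw [himg, Finset.sum_mul, Finset.sum_congr rfl]
  intro e he
  induction e using Sym2.ind with
  | _ x y =>
    have hadj : H.Adj x y := by
      rwa [SimpleGraph.mem_edgeFinset, SimpleGraph.mem_edgeSet] at he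
    have hxy : x ≠ y := hadj.ne
    have hfib : {p ∈ (univ : Finset (V × V)).filter (fun p => H.Adj p.1 p.2) |
        Sym2.mk.uncurry p = s(x, y)} = {(x, y), (y, x)} := by
      ext ⟨a, b⟩
      simp only [Finset.mem_filter, Finset.mem_univ, true_and, Finset.mem_insert,
        Finset.mem_singleton, Prod.mk.injEq, Function.uncurry_apply_pair, Sym2.eq_iff]
      constructor
      · rintro ⟨-, ⟨rfl, rfl⟩ | ⟨rfl, rfl⟩⟩
        · exact Or.inl ⟨rfl, rfl⟩
        · exact Or.inr ⟨rfl, rfl⟩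
      · rintro (⟨rfl, rfl⟩ | ⟨rfl, rfl⟩)
        · exact ⟨hadj, Or.inl ⟨rfl, rfl⟩⟩
        · exact ⟨hadj.symm, Or.inr ⟨rfl, rfl⟩⟩
    rw [hfib, Finset.card_insert_of_notMem (by simp [Prod.ext_iff, hxy]),
      Finset.card_singleton]
    rw [mul_comm]
    norm_num [two_mul]

private lemma cast_M2_eq (G H : SimpleGraph V) [Fintype H.edgeSet] :
    ((∑ e ∈ H.edgeFinset,
        Sym2.lift ⟨fun u v => G.degree u * G.degree v, fun _ _ => mul_comm _ _⟩ e : ℕ) : ℚ)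
      = ∑ e ∈ H.edgeFinset, Dq G e := by
  rw [Nat.cast_sum]
  refine Finset.sum_congr rfl fun e _ => ?_
  induction e using Sym2.ind with
  | _ x y => simp [Dq]

end Aux

open Zagreb in
theorem stmt1 {V : Type*} [Fintype V] (G : SimpleGraph V) :
    (M2bar G : ℚ) =
      2 * (G.edgeFinset.card : ℚ) ^ 2 - (1 / 2) * (M1 G : ℚ) - (M2 G : ℚ) := by
  classical
  have h2 : (M2 G : ℚ) = ∑ e ∈ G.edgeFinset, Dq G e := cast_M2_eq G G
  have h2b : (M2bar G : ℚ) = ∑ e ∈ Gᶜ.edgeFinset, Dq G e := cast_M2_eq G Gᶜ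
  -- combine the two sums over ordered pairs
  have hsum : ((M2 G : ℚ) + M2bar G) * 2 =
      ∑ p ∈ (univ : Finset V).offDiag, (G.degree p.1 : ℚ) * G.degree p.2 := by
    rw [h2, h2b, add_mul, sum_edge_eq G G, sum_edge_eq G Gᶜ, ← Finset.sum_union]
    · apply Finset.sum_congr _ fun _ _ => rfl
      ext ⟨a, b⟩
      simp only [Finset.mem_union, Finset.mem_filter, Finset.mem_univ, true_and,
        Finset.mem_offDiag, SimpleGraph.compl_adj]
      constructor
      · rintro (h | h)
        · exact h.ne
        · exact h.1
      · intro hne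
        by_cases h : G.Adj a b
        · exact Or.inl h
        · exact Or.inr ⟨hne, h⟩
    · simp only [Finset.disjoint_left, Finset.mem_filter, Finset.mem_univ, true_and,
        SimpleGraph.compl_adj, not_and, not_not]
      exact fun p h hne => h
  have hdeg : (∑ v, (G.degree v : ℚ)) = 2 * G.edgeFinset.card := by
    rw [← Nat.cast_sum]
    norm_cast
    simpa using G.sum_degrees_eq_twice_card_edges
  have hM1 : (M1 G : ℚ) = ∑ v, (G.degree v : ℚ) ^ 2 := by
    simp [M1]
  have hoff : ∑ p ∈ (univ : Finset V).offDiag, (G.degree p.1 : ℚ) * G.degree p.2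
      = (∑ v, (G.degree v : ℚ)) ^ 2 - ∑ v, (G.degree v : ℚ) ^ 2 := by
    have hsplit : ∑ p ∈ ((univ : Finset V) ×ˢ univ), (G.degree p.1 : ℚ) * G.degree p.2
        = ∑ p ∈ (univ : Finset V).diag, (G.degree p.1 : ℚ) * G.degree p.2
          + ∑ p ∈ (univ : Finset V).offDiag, (G.degree p.1 : ℚ) * G.degree p.2 := by
      rw [← Finset.sum_union (Finset.disjoint_diag_offDiag _), Finset.diag_union_offDiag]
    have hprod : ∑ p ∈ ((univ : Finset V) ×ˢ univ), (G.degree p.1 : ℚ) * G.degree p.2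
        = (∑ v, (G.degree v : ℚ)) ^ 2 := by
      rw [Finset.sum_product, sq, Finset.sum_mul_sum]
    have hdiag : ∑ p ∈ (univ : Finset V).diag, (G.degree p.1 : ℚ) * G.degree p.2
        = ∑ v, (G.degree v : ℚ) ^ 2 := by
      rw [Finset.sum_diag]
      exact Finset.sum_congr rfl fun v _ => (sq _).symm
    rw [hprod, hdiag] at hsplit
    linarith
  rw [hoff, hdeg, ← hM1] at hsum
  have h2' : (M2 G : ℚ) = ∑ e ∈ G.edgeFinset, Dq G e := h2
  linarith [hsum]
end
end

section
/- Let k \geq 3, n - k \geq 1, and G = L(S(CS_{k,n-k})). Then the first Zagreb index of G is M_1(G) = n^3 + (6-3k)n^2 + (3k^2 - 12k + 13)n - k^3 + 6k^2 - 5k. -/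
open scoped Classical
open Finset

noncomputable section

section Aux

open SimpleGraph

variable {V : Type*}

lemma card_mem_edge [Fintype V] [DecidableEq V] (G : SimpleGraph V) (e : G.edgeSet) :
    Fintype.card {w : V // w ∈ (e : Sym2 V)} = 2 := by
  obtain ⟨e, he⟩ := e
  induction e using Sym2.ind with
  | _ a b =>
    have hne : a ≠ b := (G.mem_edgeSet.mp he).ne
    rw [Fintype.card_subtype]
    have h : Finset.univ.filter
        (fun w => w ∈ ((⟨s(a, b), he⟩ : G.edgeSet) : Sym2 V)) = {a, b} := by
      ext w
      rw [Finset.mem_filter]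
      simp only [Finset.mem_univ, true_and, Finset.mem_insert, Finset.mem_singleton]
      exact Sym2.mem_iff
    rw [h, Finset.card_pair hne]

lemma card_incEdges [Fintype V] [DecidableEq V] (G : SimpleGraph V) (v : V) :
    Fintype.card {e : G.edgeSet // v ∈ (e : Sym2 V)} = G.degree v := by
  rw [← SimpleGraph.card_incidenceSet_eq_degree]
  exact Fintype.card_congr ⟨fun e => ⟨e.1.1, e.1.2, e.2⟩, fun e => ⟨⟨e.1, e.2.1⟩, e.2.2⟩,
    fun _ => rfl, fun _ => rfl⟩

lemma lineGraph_degree [Fintype V] [DecidableEq V] {H : SimpleGraph V}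
    (f : H.edgeSet) (a b : V) (hab : (f : Sym2 V) = s(a, b)) :
    (Zagreb.lineGraph H).degree f + 2 = H.degree a + H.degree b := by
  have hne : a ≠ b := by
    have h2 := f.2
    rw [hab, SimpleGraph.mem_edgeSet] at h2
    exact h2.ne
  have ha : a ∈ (f : Sym2 V) := by rw [hab]; simp
  have hb : b ∈ (f : Sym2 V) := by rw [hab]; simp
  set A := Finset.univ.filter (fun f' : H.edgeSet => a ∈ (f' : Sym2 V)) with hA
  set B := Finset.univ.filter (fun f' : H.edgeSet => b ∈ (f' : Sym2 V)) with hB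
  have hAcard : A.card = H.degree a := by
    rw [hA, ← card_incEdges H a, Fintype.card_subtype]
  have hBcard : B.card = H.degree b := by
    rw [hB, ← card_incEdges H b, Fintype.card_subtype]
  have hinter : A ∩ B = {f} := by
    ext f'
    simp only [hA, hB, Finset.mem_inter, Finset.mem_filter, Finset.mem_univ, true_and,
      Finset.mem_singleton]
    constructor
    · rintro ⟨h1, h2⟩
      exact Subtype.ext (Sym2.eq_of_ne_mem hne h1 h2 ha hb)
    · rintro rfl; exact ⟨ha, hb⟩
  have hunion : A ∪ B = insert f ((Zagreb.lineGraph H).neighborFinset f) := by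
    ext f'
    simp only [hA, hB, Finset.mem_union, Finset.mem_filter, Finset.mem_univ, true_and,
      Finset.mem_insert, SimpleGraph.mem_neighborFinset]
    constructor
    · rintro (h | h)
      · by_cases hf : f' = f
        · exact Or.inl hf
        · exact Or.inr ⟨Ne.symm hf, a, ha, h⟩
      · by_cases hf : f' = f
        · exact Or.inl hf
        · exact Or.inr ⟨Ne.symm hf, b, hb, h⟩
    · rintro (rfl | ⟨hne', v, hv1, hv2⟩)
      · exact Or.inl ha
      · rw [hab, Sym2.mem_iff] at hv1
        rcases hv1 with rfl | rfl
        · exact Or.inl hv2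
        · exact Or.inr hv2
  have hf_not : f ∉ (Zagreb.lineGraph H).neighborFinset f := by
    rw [SimpleGraph.mem_neighborFinset]
    exact (Zagreb.lineGraph H).irrefl
  have hdeg : (Zagreb.lineGraph H).degree f = ((Zagreb.lineGraph H).neighborFinset f).card := rfl
  have hcu := Finset.card_union_add_card_inter A B
  rw [hunion, hinter, Finset.card_insert_of_notMem hf_not, Finset.card_singleton,
    hAcard, hBcard] at hcu
  omega

lemma subdivision_degree_inl [Fintype V] [DecidableEq V] (G : SimpleGraph V) (v : V) :
    (Zagreb.subdivision G).degree (Sum.inl v) = G.degree v := by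
  rw [← SimpleGraph.card_neighborSet_eq_degree, ← card_incEdges G v]
  apply Fintype.card_congr
  exact ⟨fun x => match x with
    | ⟨Sum.inr e, h⟩ => ⟨e, h⟩
    | ⟨Sum.inl w, h⟩ => False.elim h,
    fun e => ⟨Sum.inr e.1, e.2⟩,
    fun x => match x with
    | ⟨Sum.inr e, h⟩ => rfl
    | ⟨Sum.inl w, h⟩ => False.elim h,
    fun e => rfl⟩

lemma subdivision_degree_inr [Fintype V] [DecidableEq V] (G : SimpleGraph V) (e : G.edgeSet) :
    (Zagreb.subdivision G).degree (Sum.inr e) = 2 := by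
  rw [← SimpleGraph.card_neighborSet_eq_degree, ← card_mem_edge G e]
  apply Fintype.card_congr
  exact ⟨fun x => match x with
    | ⟨Sum.inl w, h⟩ => ⟨w, h⟩
    | ⟨Sum.inr f, h⟩ => False.elim h,
    fun w => ⟨Sum.inl w.1, w.2⟩,
    fun x => match x with
    | ⟨Sum.inl w, h⟩ => rfl
    | ⟨Sum.inr f, h⟩ => False.elim h,
    fun w => rfl⟩

lemma M1_lineGraph_subdivision [Fintype V] [DecidableEq V] (G : SimpleGraph V) :
    Zagreb.M1 (Zagreb.lineGraph (Zagreb.subdivision G)) = ∑ v, (G.degree v) ^ 3 := by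
  have hΦbij : Function.Bijective
      (fun p : (Σ v : V, {e : G.edgeSet // v ∈ (e : Sym2 V)}) =>
        (⟨s(Sum.inl p.1, Sum.inr p.2.1), by
          rw [SimpleGraph.mem_edgeSet]; exact p.2.2⟩ : (Zagreb.subdivision G).edgeSet)) := by
    constructor
    · rintro ⟨v, e, he⟩ ⟨v', e', he'⟩ h
      simp only [Subtype.mk.injEq, Sym2.eq_iff] at h
      rcases h with ⟨h1, h2⟩ | ⟨h1, h2⟩
      · obtain rfl : v = v' := Sum.inl.inj h1
        obtain rfl : e = e' := Sum.inr.inj h2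
        rfl
      · exact absurd h1 (by simp)
    · rintro ⟨f, hf⟩
      induction f using Sym2.ind with
      | _ x y =>
        rw [SimpleGraph.mem_edgeSet] at hf
        match x, y, hf with
        | Sum.inl v, Sum.inr e, hf => exact ⟨⟨v, e, hf⟩, rfl⟩
        | Sum.inr e, Sum.inl v, hf =>
          exact ⟨⟨v, e, hf⟩, Subtype.ext (Sym2.eq_swap)⟩
  set Φ := Equiv.ofBijective _ hΦbij with hΦ
  have key : ∀ p : (Σ v : V, {e : G.edgeSet // v ∈ (e : Sym2 V)}),
      (Zagreb.lineGraph (Zagreb.subdivision G)).degree (Φ p) = G.degree p.1 := by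
    intro p
    have h := lineGraph_degree (Φ p) (Sum.inl p.1) (Sum.inr p.2.1) rfl
    rw [subdivision_degree_inl, subdivision_degree_inr] at h
    omega
  rw [Zagreb.M1]
  rw [← Fintype.sum_equiv Φ (fun p => (G.degree p.1) ^ 2)
    (fun f => ((Zagreb.lineGraph (Zagreb.subdivision G)).degree f) ^ 2)
    (fun p => (congrArg (· ^ 2) (key p)).symm)]
  rw [← Finset.univ_sigma_univ, Finset.sum_sigma]
  refine Finset.sum_congr rfl fun v _ => ?_
  have h : ∑ _s : {e : G.edgeSet // v ∈ (e : Sym2 V)}, G.degree v ^ 2 = G.degree v ^ 3 := by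
    rw [Finset.sum_const, Finset.card_univ, card_incEdges, smul_eq_mul]
    ring
  exact h

end Aux

section CS

open SimpleGraph

lemma mod_succ_eq {k x : ℕ} (hx : x < k) : (x + 1) % k = if x + 1 = k then 0 else x + 1 := by
  split_ifs with h
  · rw [h, Nat.mod_self]
  · exact Nat.mod_eq_of_lt (by omega)

lemma mod_pred_eq {k x : ℕ} (hx : x < k) :
    (x + k - 1) % k = if x = 0 then k - 1 else x - 1 := by
  split_ifs with h
  · subst h
    simp only [Nat.zero_add]
    exact Nat.mod_eq_of_lt (by omega)
  · have h2 : x + k - 1 = (x - 1) + k := by omega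
    rw [h2, Nat.add_mod_right]
    exact Nat.mod_eq_of_lt (by omega)

lemma cs_adj_ll {k l : ℕ} (i j : Fin k) :
    (Zagreb.cycleStar k l).Adj (Sum.inl i) (Sum.inl j) ↔
      i ≠ j ∧ ((i.val + 1) % k = j.val ∨ (j.val + 1) % k = i.val) := Iff.rfl

lemma cs_adj_lr {k l : ℕ} (i : Fin k) (a : Fin l) :
    (Zagreb.cycleStar k l).Adj (Sum.inl i) (Sum.inr a) ↔ i.val = 0 := Iff.rfl

lemma cs_adj_rl {k l : ℕ} (i : Fin k) (a : Fin l) :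
    (Zagreb.cycleStar k l).Adj (Sum.inr a) (Sum.inl i) ↔ i.val = 0 := Iff.rfl

lemma cs_adj_rr {k l : ℕ} (a b : Fin l) :
    (Zagreb.cycleStar k l).Adj (Sum.inr a) (Sum.inr b) ↔ False := Iff.rfl

lemma cs_deg_inr {k l : ℕ} (hk : 0 < k) (a : Fin l) :
    (Zagreb.cycleStar k l).degree (Sum.inr a) = 1 := by
  have h : (Zagreb.cycleStar k l).neighborFinset (Sum.inr a) = {Sum.inl ⟨0, hk⟩} := by
    ext x
    rcases x with i | b
    · simp only [SimpleGraph.mem_neighborFinset, cs_adj_rl, Finset.mem_singleton,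
        Sum.inl.injEq, Fin.ext_iff]
    · simp only [SimpleGraph.mem_neighborFinset, cs_adj_rr]
      simp
  have hd : (Zagreb.cycleStar k l).degree (Sum.inr a)
      = ((Zagreb.cycleStar k l).neighborFinset (Sum.inr a)).card := rfl
  rw [hd, h, Finset.card_singleton]

lemma cs_deg_inl_ne {k l : ℕ} (hk : 3 ≤ k) (i : Fin k) (hi : i.val ≠ 0) :
    (Zagreb.cycleStar k l).degree (Sum.inl i) = 2 := by
  have hik := i.isLt
  have h : (Zagreb.cycleStar k l).neighborFinset (Sum.inl i) =
      {Sum.inl ⟨(i.val + 1) % k, Nat.mod_lt _ (by omega)⟩,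
       Sum.inl ⟨(i.val + k - 1) % k, Nat.mod_lt _ (by omega)⟩} := by
    ext x
    rcases x with j | b
    · have hjk := j.isLt
      simp only [SimpleGraph.mem_neighborFinset, cs_adj_ll, Finset.mem_insert,
        Finset.mem_singleton, Sum.inl.injEq, Fin.ext_iff, ne_eq]
      rw [mod_succ_eq hik, mod_pred_eq hik, mod_succ_eq hjk]
      split_ifs <;> omega
    · simp only [SimpleGraph.mem_neighborFinset, cs_adj_lr, Finset.mem_insert,
        Finset.mem_singleton, hi]
      simp
  have hd : (Zagreb.cycleStar k l).degree (Sum.inl i)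
      = ((Zagreb.cycleStar k l).neighborFinset (Sum.inl i)).card := rfl
  rw [hd, h, Finset.card_pair]
  simp only [ne_eq, Sum.inl.injEq, Fin.ext_iff]
  rw [mod_succ_eq hik, mod_pred_eq hik]
  split_ifs <;> omega

lemma cs_deg_inl_zero {k l : ℕ} (hk : 3 ≤ k) (i : Fin k) (hi : i.val = 0) :
    (Zagreb.cycleStar k l).degree (Sum.inl i) = l + 2 := by
  have hik := i.isLt
  have h : (Zagreb.cycleStar k l).neighborFinset (Sum.inl i) =
      insert (Sum.inl ⟨1, by omega⟩) (insert (Sum.inl ⟨k - 1, by omega⟩)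
        ((Finset.univ : Finset (Fin l)).image Sum.inr)) := by
    ext x
    rcases x with j | b
    · have hjk := j.isLt
      simp only [SimpleGraph.mem_neighborFinset, cs_adj_ll, Finset.mem_insert,
        Finset.mem_image, Finset.mem_univ, true_and, Sum.inl.injEq, Fin.ext_iff, ne_eq]
      rw [mod_succ_eq hik, mod_succ_eq hjk]
      have hni : ¬ ∃ a : Fin l, Sum.inr a = Sum.inl j := by rintro ⟨a, ha⟩; simp at ha
      simp only [hni, or_false]
      split_ifs <;> omega
    · simp only [SimpleGraph.mem_neighborFinset, cs_adj_lr, Finset.mem_insert,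
        Finset.mem_image, Finset.mem_univ, true_and, hi]
      simp
  have hd : (Zagreb.cycleStar k l).degree (Sum.inl i)
      = ((Zagreb.cycleStar k l).neighborFinset (Sum.inl i)).card := rfl
  have hm1 : (Sum.inl ⟨k - 1, by omega⟩ : Fin k ⊕ Fin l) ∉
      (Finset.univ : Finset (Fin l)).image Sum.inr := by
    rintro h2
    rcases Finset.mem_image.mp h2 with ⟨a, _, ha⟩
    simp at ha
  have hm2 : (Sum.inl ⟨1, by omega⟩ : Fin k ⊕ Fin l) ∉
      insert (Sum.inl ⟨k - 1, by omega⟩) ((Finset.univ : Finset (Fin l)).image Sum.inr) := by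
    rintro h2
    rcases Finset.mem_insert.mp h2 with h2 | h2
    · simp only [Sum.inl.injEq, Fin.mk.injEq] at h2
      omega
    · rcases Finset.mem_image.mp h2 with ⟨a, _, ha⟩
      simp at ha
  rw [hd, h, Finset.card_insert_of_notMem hm2, Finset.card_insert_of_notMem hm1,
    Finset.card_image_of_injective _ Sum.inr_injective, Finset.card_univ, Fintype.card_fin]

end CS



open Zagreb in
theorem stmt6 (n k : ℕ) (hk : 3 ≤ k) (hn : k + 1 ≤ n) :
    (M1 (lineGraph (subdivision (cycleStar k (n - k)))) : ℤ) =
      (n : ℤ) ^ 3 + (6 - 3 * k) * n ^ 2 + (3 * k ^ 2 - 12 * k + 13) * n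
        - k ^ 3 + 6 * k ^ 2 - 5 * k := by
  have hk0 : 0 < k := by omega
  set l := n - k with hl
  have hM1 : M1 (lineGraph (subdivision (cycleStar k l))) + 8 =
      (l + 2) ^ 3 + k * 8 + l := by
    rw [M1_lineGraph_subdivision]
    rw [Fintype.sum_sum_type]
    have hsum2 : ∑ a : Fin l, (cycleStar k l).degree (Sum.inr a) ^ 3 = l := by
      rw [Finset.sum_congr rfl (fun a _ => by rw [cs_deg_inr hk0]), Finset.sum_const,
        Finset.card_univ, Fintype.card_fin, smul_eq_mul, one_pow, mul_one]
    have hsum1 : ∑ i : Fin k, (cycleStar k l).degree (Sum.inl i) ^ 3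
        = (l + 2) ^ 3 + (k - 1) * 8 := by
      have hcong : ∀ i : Fin k, (cycleStar k l).degree (Sum.inl i) ^ 3
          = if i.val = 0 then (l + 2) ^ 3 else 8 := by
        intro i
        by_cases h : i.val = 0
        · rw [cs_deg_inl_zero hk i h, if_pos h]
        · rw [cs_deg_inl_ne hk i h, if_neg h]
          norm_num
      rw [Finset.sum_congr rfl (fun i _ => hcong i), Finset.sum_ite]
      have h1 : Finset.univ.filter (fun i : Fin k => i.val = 0) = {⟨0, hk0⟩} := by
        ext i
        simp [Fin.ext_iff]
      have h2 : (Finset.univ.filter (fun i : Fin k => ¬ i.val = 0)).card = k - 1 := by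
        rw [Finset.filter_not, Finset.card_sdiff_of_subset (Finset.filter_subset _ _), Finset.card_univ,
          Fintype.card_fin, h1, Finset.card_singleton]
      rw [Finset.sum_const, Finset.sum_const, h1, Finset.card_singleton, h2]
      simp [smul_eq_mul]
    rw [hsum1, hsum2]
    omega
  have hcast : ((M1 (lineGraph (subdivision (cycleStar k l))) : ℤ)) + 8
      = ((l : ℤ) + 2) ^ 3 + (k : ℤ) * 8 + (l : ℤ) := by exact_mod_cast hM1
  have hnl : (n : ℤ) = (k : ℤ) + (l : ℤ) := by
    have h : n = k + l := by omega
    exact_mod_cast h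
  rw [hnl]
  linear_combination hcast
end
end

section
/- Let k \geq 3, n - k \geq 1, and G = L(S(CS_{k,n-k})). Then the second Zagreb index of G is M_2(G) = \frac{1}{2}\left( n^4 + (7-4k)n^3 + (6k^2 - 21k + 20)n^2 - (4k^3 - 21k^2 + 40k - 32)n + k^4 - 7k^3 + 20k^2 - 16k \right). -/
open scoped Classical
open Finset

noncomputable section

namespace ZagrebAux

open Zagreb SimpleGraph Finset

variable {V : Type*} {W : Type*}

/-- The graph on darts of `G`: adjacent iff distinct and share tail or edge. -/
def dartGraph (G : SimpleGraph V) : SimpleGraph G.Dart where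
  Adj d d' := d ≠ d' ∧ (d.fst = d'.fst ∨ d.edge = d'.edge)
  symm := by
    constructor
    rintro d d' ⟨h1, h2⟩
    exact ⟨h1.symm, h2.imp Eq.symm Eq.symm⟩
  loopless := ⟨fun d h => h.1 rfl⟩

lemma dart_eq_of_fst_edge {G : SimpleGraph V} {d d' : G.Dart}
    (h1 : d.fst = d'.fst) (h2 : d.edge = d'.edge) : d = d' := by
  rcases (dart_edge_eq_iff d d').mp h2 with h | h
  · exact h
  · exfalso
    have : d.fst = d'.snd := by rw [h]; rfl
    rw [h1] at this
    exact d'.fst_ne_snd this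

def dartToEdge (G : SimpleGraph V) (d : G.Dart) : (subdivision G).edgeSet :=
  ⟨s(Sum.inl d.fst, Sum.inr ⟨d.edge, d.edge_mem⟩), by
    rw [SimpleGraph.mem_edgeSet]
    show d.fst ∈ d.edge
    exact Sym2.mem_mk_left _ _⟩

lemma dartToEdge_injective (G : SimpleGraph V) : Function.Injective (dartToEdge G) := by
  intro d d' h
  rw [dartToEdge, dartToEdge, Subtype.mk_eq_mk, Sym2.eq, Sym2.rel_iff'] at h
  rcases h with h | h
  · obtain ⟨h1, h2⟩ := Prod.mk.injEq .. ▸ h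
    exact dart_eq_of_fst_edge (Sum.inl_injective h1)
      (congrArg Subtype.val (Sum.inr_injective h2))
  · obtain ⟨h1, h2⟩ := Prod.mk.injEq .. ▸ h
    exact absurd h1 (by simp)

lemma dartToEdge_surjective (G : SimpleGraph V) : Function.Surjective (dartToEdge G) := by
  rintro ⟨e, he⟩
  induction e with
  | _ x y =>
    rw [SimpleGraph.mem_edgeSet] at he
    rcases x with v | ⟨f, hf⟩ <;> rcases y with w | ⟨g, hg⟩
    · exact absurd he (by simp [subdivision])
    · have hvg : v ∈ g := he
      induction g with
      | _ a b =>
        have hab : G.Adj a b := hg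
        rcases Sym2.mem_iff.mp hvg with rfl | rfl
        · exact ⟨⟨(v, b), hab⟩, Subtype.ext rfl⟩
        · exact ⟨⟨(v, a), hab.symm⟩, Subtype.ext
            (congrArg (fun z : G.edgeSet => s(Sum.inl v, Sum.inr z)) (Subtype.ext Sym2.eq_swap))⟩
    · have hwf : w ∈ f := he
      induction f with
      | _ a b =>
        have hab : G.Adj a b := hf
        rcases Sym2.mem_iff.mp hwf with rfl | rfl
        · exact ⟨⟨(w, b), hab⟩, Subtype.ext Sym2.eq_swap⟩
        · exact ⟨⟨(w, a), hab.symm⟩, Subtype.ext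
            ((congrArg (fun z : G.edgeSet => s(Sum.inl w, Sum.inr z))
              (Subtype.ext Sym2.eq_swap)).trans Sym2.eq_swap)⟩
    · exact absurd he (by simp [subdivision])

lemma dartToEdge_adj (G : SimpleGraph V) (d d' : G.Dart) :
    (Zagreb.lineGraph (subdivision G)).Adj (dartToEdge G d) (dartToEdge G d') ↔
      (dartGraph G).Adj d d' := by
  constructor
  · rintro ⟨hne, x, hx1, hx2⟩
    refine ⟨fun h => hne (by rw [h]), ?_⟩
    rw [dartToEdge] at hx1 hx2
    simp only [Sym2.mem_iff] at hx1 hx2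
    rcases hx1 with rfl | rfl <;> rcases hx2 with h | h
    · exact Or.inl (Sum.inl_injective h)
    · exact absurd h (by simp)
    · exact absurd h (by simp)
    · exact Or.inr (congrArg Subtype.val (Sum.inr_injective h))
  · rintro ⟨hne, h⟩
    refine ⟨fun hc => hne (dartToEdge_injective G hc), ?_⟩
    rcases h with h | h
    · exact ⟨Sum.inl d.fst, Sym2.mem_mk_left _ _, by rw [h]; exact Sym2.mem_mk_left _ _⟩
    · refine ⟨Sum.inr ⟨d.edge, d.edge_mem⟩, Sym2.mem_mk_right _ _, ?_⟩
      rw [show (⟨d.edge, d.edge_mem⟩ : G.edgeSet) = ⟨d'.edge, d'.edge_mem⟩ from Subtype.ext h]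
      exact Sym2.mem_mk_right _ _

def dartIso (G : SimpleGraph V) : dartGraph G ≃g Zagreb.lineGraph (subdivision G) :=
  { Equiv.ofBijective (dartToEdge G) ⟨dartToEdge_injective G, dartToEdge_surjective G⟩ with
    map_rel_iff' := fun {d d'} => dartToEdge_adj G d d' }

section FT

variable [Fintype V] [Fintype W]

lemma sum_dart_eq (G : SimpleGraph V) (f : V → V → ℕ) :
    ∑ d : G.Dart, f d.fst d.snd = ∑ v, ∑ w ∈ G.neighborFinset v, f v w := by
  rw [← Finset.sum_fiberwise_of_maps_to (g := fun d : G.Dart => d.fst) (t := Finset.univ)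
    (fun d _ => Finset.mem_univ d.fst)]
  refine Finset.sum_congr rfl fun v _ => ?_
  refine Finset.sum_bij (i := fun d _ => d.snd) ?_ ?_ ?_ ?_
  · intro d hd
    simp only [Finset.mem_filter, Finset.mem_univ, true_and] at hd
    exact (SimpleGraph.mem_neighborFinset _ _ _).mpr (hd ▸ d.adj)
  · intro d1 h1 d2 h2 heq
    simp only [Finset.mem_filter, Finset.mem_univ, true_and] at h1 h2
    exact Dart.ext _ _ (Prod.ext (h1.trans h2.symm) heq)
  · intro w hw
    rw [mem_neighborFinset] at hw
    exact ⟨⟨(v, w), hw⟩, by simp, rfl⟩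
  · intro d hd
    simp only [Finset.mem_filter, Finset.mem_univ, true_and] at hd
    rw [hd]

lemma two_mul_m2 (G : SimpleGraph V) :
    2 * M2 G = ∑ d : G.Dart, G.degree d.fst * G.degree d.snd := by
  have h1 : ∀ d : G.Dart, G.degree d.fst * G.degree d.snd =
      Sym2.lift ⟨fun u v => G.degree u * G.degree v, fun _ _ => mul_comm _ _⟩ d.edge :=
    fun d => rfl
  calc 2 * M2 G = ∑ e ∈ G.edgeFinset, ∑ d ∈ Finset.univ.filter (fun d : G.Dart => d.edge = e),
      G.degree d.fst * G.degree d.snd := by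
        rw [M2, Finset.mul_sum]
        refine Finset.sum_congr rfl fun e he => ?_
        have : ∀ d ∈ Finset.univ.filter (fun d : G.Dart => d.edge = e),
            G.degree d.fst * G.degree d.snd =
            Sym2.lift ⟨fun u v => G.degree u * G.degree v, fun _ _ => mul_comm _ _⟩ e := by
          intro d hd
          simp only [Finset.mem_filter, Finset.mem_univ, true_and] at hd
          rw [h1 d, hd]
        rw [Finset.sum_congr rfl this, Finset.sum_const, smul_eq_mul,
          G.dart_edge_fiber_card e (by simpa [mem_edgeFinset] using he), mul_comm]
    _ = ∑ d : G.Dart, G.degree d.fst * G.degree d.snd :=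
        Finset.sum_fiberwise_of_maps_to (fun d _ => by simp [mem_edgeFinset]) _

lemma iso_degree {G : SimpleGraph V} {H : SimpleGraph W} (f : G ≃g H) (v : V) :
    G.degree v = H.degree (f v) := by
  rw [← card_neighborSet_eq_degree, ← card_neighborSet_eq_degree]
  exact Fintype.card_congr (f.mapNeighborSet v)

def dartEquivOfIso {G : SimpleGraph V} {H : SimpleGraph W} (f : G ≃g H) : G.Dart ≃ H.Dart where
  toFun d := ⟨(f d.fst, f d.snd), f.map_adj_iff.mpr d.adj⟩
  invFun d := ⟨(f.symm d.fst, f.symm d.snd), f.symm.map_adj_iff.mpr d.adj⟩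
  left_inv d := Dart.ext _ _ (by simp)
  right_inv d := Dart.ext _ _ (by simp)

lemma m2_iso {G : SimpleGraph V} {H : SimpleGraph W} (f : G ≃g H) : M2 G = M2 H := by
  have h : 2 * M2 G = 2 * M2 H := by
    rw [two_mul_m2, two_mul_m2]
    refine Fintype.sum_equiv (dartEquivOfIso f) _ _ fun d => ?_
    show _ = H.degree (f d.fst) * H.degree (f d.snd)
    rw [← iso_degree f, ← iso_degree f]
  omega

lemma dartGraph_neighborFinset (G : SimpleGraph V) (d : G.Dart) :
    (dartGraph G).neighborFinset d =
      insert d.symm ((Finset.univ.filter (fun d' : G.Dart => d'.fst = d.fst)).erase d) := by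
  ext d'
  simp only [mem_neighborFinset, Finset.mem_insert, Finset.mem_erase, Finset.mem_filter,
    Finset.mem_univ, true_and]
  constructor
  · rintro ⟨hne, h | h⟩
    · exact Or.inr ⟨fun hc => hne hc.symm, h.symm⟩
    · rcases (dart_edge_eq_iff d d').mp h with h' | h'
      · exact absurd h' hne
      · exact Or.inl (by rw [h', Dart.symm_symm])
  · rintro (rfl | ⟨hne, heq⟩)
    · exact ⟨d.symm_ne.symm, Or.inr (d.edge_symm).symm⟩
    · exact ⟨Ne.symm hne, Or.inl heq.symm⟩

lemma symm_not_mem_erase (G : SimpleGraph V) (d : G.Dart) :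
    d.symm ∉ (Finset.univ.filter (fun d' : G.Dart => d'.fst = d.fst)).erase d := by
  simp only [Finset.mem_erase, Finset.mem_filter, Finset.mem_univ, true_and, not_and]
  intro _
  exact d.snd_ne_fst

lemma degree_fst_pos (G : SimpleGraph V) (d : G.Dart) : 0 < G.degree d.fst := by
  rw [← card_neighborFinset_eq_degree]
  exact Finset.card_pos.mpr ⟨d.snd, (mem_neighborFinset _ _ _).mpr d.adj⟩

lemma dart_mem_fiber (G : SimpleGraph V) (d : G.Dart) :
    d ∈ Finset.univ.filter (fun d' : G.Dart => d'.fst = d.fst) := by simp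

lemma fiber_card (G : SimpleGraph V) (d : G.Dart) :
    (Finset.univ.filter (fun d' : G.Dart => d'.fst = d.fst)).card = G.degree d.fst :=
  G.dart_fst_fiber_card_eq_degree d.fst

lemma dartGraph_degree (G : SimpleGraph V) (d : G.Dart) :
    (dartGraph G).degree d = G.degree d.fst := by
  rw [← card_neighborFinset_eq_degree, dartGraph_neighborFinset,
    Finset.card_insert_of_notMem (symm_not_mem_erase G d),
    Finset.card_erase_of_mem (dart_mem_fiber G d), fiber_card]
  have := degree_fst_pos G d
  omega

lemma dartGraph_nbrsum (G : SimpleGraph V) (d : G.Dart) :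
    ∑ d' ∈ (dartGraph G).neighborFinset d, G.degree d'.fst =
      (G.degree d.fst - 1) * G.degree d.fst + G.degree d.snd := by
  rw [dartGraph_neighborFinset, Finset.sum_insert (symm_not_mem_erase G d)]
  have h : ∀ d' ∈ (Finset.univ.filter (fun d' : G.Dart => d'.fst = d.fst)).erase d,
      G.degree d'.fst = G.degree d.fst := by
    intro d' hd'
    rw [Finset.mem_erase, Finset.mem_filter] at hd'
    rw [hd'.2.2]
  rw [Finset.sum_congr rfl h, Finset.sum_const,
    Finset.card_erase_of_mem (dart_mem_fiber G d), fiber_card, smul_eq_mul]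
  show G.degree d.snd + _ = _
  omega

set_option maxHeartbeats 2000000 in
lemma key_formula (G : SimpleGraph V) :
    2 * M2 (Zagreb.lineGraph (subdivision G)) =
      (∑ v, (G.degree v) ^ 3 * (G.degree v - 1)) +
      ∑ v, G.degree v * ∑ w ∈ G.neighborFinset v, G.degree w := by
  rw [← m2_iso (dartIso G), two_mul_m2]
  calc ∑ d : (dartGraph G).Dart, (dartGraph G).degree d.fst * (dartGraph G).degree d.snd
      = ∑ d : G.Dart, ∑ d' ∈ (dartGraph G).neighborFinset d,
          (dartGraph G).degree d * (dartGraph G).degree d' :=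
        sum_dart_eq (dartGraph G) (fun d d' => (dartGraph G).degree d * (dartGraph G).degree d')
    _ = ∑ d : G.Dart, G.degree d.fst *
          ((G.degree d.fst - 1) * G.degree d.fst + G.degree d.snd) := by
        refine Finset.sum_congr rfl fun d _ => ?_
        have h : ∀ d' ∈ (dartGraph G).neighborFinset d,
            (dartGraph G).degree d * (dartGraph G).degree d' =
              G.degree d.fst * G.degree d'.fst := by
          intro d' _
          rw [dartGraph_degree, dartGraph_degree]
        rw [Finset.sum_congr rfl h, ← Finset.mul_sum, dartGraph_nbrsum]
    _ = ∑ v, ∑ w ∈ G.neighborFinset v,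
          G.degree v * ((G.degree v - 1) * G.degree v + G.degree w) :=
        sum_dart_eq G (fun v w => G.degree v * ((G.degree v - 1) * G.degree v + G.degree w))
    _ = (∑ v, (G.degree v) ^ 3 * (G.degree v - 1)) +
          ∑ v, G.degree v * ∑ w ∈ G.neighborFinset v, G.degree w := by
        rw [← Finset.sum_add_distrib]
        refine Finset.sum_congr rfl fun v _ => ?_
        simp_rw [mul_add]
        rw [Finset.sum_add_distrib, Finset.sum_const, ← Finset.mul_sum,
          card_neighborFinset_eq_degree, smul_eq_mul]
        congr 1
        generalize G.degree v - 1 = y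
        ring

end FT

section CycleStarComp

variable {k l : ℕ}

abbrev CSV (k l : ℕ) := Fin k ⊕ Fin l

def zv (hk : 3 ≤ k) : Fin k := ⟨0, by omega⟩
def ov (hk : 3 ≤ k) : Fin k := ⟨1, by omega⟩
def lv (hk : 3 ≤ k) : Fin k := ⟨k - 1, by omega⟩
def nxt (hk : 3 ≤ k) (i : Fin k) : Fin k := ⟨(i.val + 1) % k, Nat.mod_lt _ (by omega)⟩
def prv (hk : 3 ≤ k) (i : Fin k) : Fin k := ⟨(i.val + (k - 1)) % k, Nat.mod_lt _ (by omega)⟩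

lemma cs_adj_inl_inl (i j : Fin k) :
    (cycleStar k l).Adj (Sum.inl i) (Sum.inl j) ↔
      (i ≠ j ∧ ((i.val + 1) % k = j.val ∨ (j.val + 1) % k = i.val)) := Iff.rfl

lemma cs_adj_inl_inr (i : Fin k) (a : Fin l) :
    (cycleStar k l).Adj (Sum.inl i) (Sum.inr a) ↔ i.val = 0 := Iff.rfl

lemma cs_adj_inr_inl (i : Fin k) (a : Fin l) :
    (cycleStar k l).Adj (Sum.inr a) (Sum.inl i) ↔ i.val = 0 := Iff.rfl

lemma cs_adj_inr_inr (a b : Fin l) :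
    ¬ (cycleStar k l).Adj (Sum.inr a) (Sum.inr b) := fun h => h

lemma hmod1 (hk : 3 ≤ k) (x : ℕ) (hx : x < k) :
    (x + 1) % k = if x + 1 = k then 0 else x + 1 := by
  split_ifs with h
  · rw [h, Nat.mod_self]
  · exact Nat.mod_eq_of_lt (by omega)

lemma nxt_val (hk : 3 ≤ k) (i : Fin k) :
    (nxt hk i).val = if i.val + 1 = k then 0 else i.val + 1 := hmod1 hk i.val i.isLt

lemma prv_val (hk : 3 ≤ k) (i : Fin k) :
    (prv hk i).val = if i.val = 0 then k - 1 else i.val - 1 := by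
  show (i.val + (k - 1)) % k = _
  split_ifs with h
  · have h2 : i.val + (k - 1) = k - 1 := by omega
    rw [h2]
    exact Nat.mod_eq_of_lt (by omega)
  · rw [Nat.mod_eq_sub_mod (show k ≤ i.val + (k - 1) by omega)]
    have h2 : i.val + (k - 1) - k = i.val - 1 := by omega
    rw [h2]
    exact Nat.mod_eq_of_lt (by omega)

lemma cs_adj_inl_iff (hk : 3 ≤ k) (i j : Fin k) :
    (cycleStar k l).Adj (Sum.inl i) (Sum.inl j) ↔ (j = nxt hk i ∨ j = prv hk i) := by
  rw [cs_adj_inl_inl]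
  have hi := i.isLt
  have hj := j.isLt
  rw [Ne, Fin.ext_iff, Fin.ext_iff (b := nxt hk i), Fin.ext_iff (b := prv hk i),
    hmod1 hk i.val hi, hmod1 hk j.val hj, nxt_val hk i, prv_val hk i]
  split_ifs <;> omega

lemma nxt_eq_zv_iff (hk : 3 ≤ k) (i : Fin k) : nxt hk i = zv hk ↔ i = lv hk := by
  rw [Fin.ext_iff, Fin.ext_iff (b := lv hk), nxt_val hk i]
  show _ = (0 : ℕ) ↔ _ = k - 1
  have := i.isLt
  split_ifs <;> (try simp only [false_iff, iff_false, true_iff, iff_true, Nat.succ_ne_zero]) <;> omega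

lemma prv_eq_zv_iff (hk : 3 ≤ k) (i : Fin k) : prv hk i = zv hk ↔ i = ov hk := by
  rw [Fin.ext_iff, Fin.ext_iff (b := ov hk), prv_val hk i]
  show _ = (0 : ℕ) ↔ _ = 1
  have := i.isLt
  split_ifs <;> (try simp only [false_iff, iff_false, true_iff, iff_true, Nat.succ_ne_zero]) <;> omega

lemma nxt_ne_prv (hk : 3 ≤ k) (i : Fin k) : nxt hk i ≠ prv hk i := by
  rw [Ne, Fin.ext_iff, nxt_val hk i, prv_val hk i]
  have := i.isLt
  split_ifs <;> omega

lemma cs_nbr_inr (hk : 3 ≤ k) (a : Fin l) :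
    (cycleStar k l).neighborFinset (Sum.inr a) = {Sum.inl (zv hk)} := by
  ext x
  rcases x with j | b
  · rw [mem_neighborFinset, cs_adj_inr_inl, Finset.mem_singleton]
    rw [show (Sum.inl j = Sum.inl (zv hk) : Prop) ↔ j = zv hk from
      ⟨fun h => Sum.inl_injective h, fun h => by rw [h]⟩]
    rw [Fin.ext_iff]
    exact Iff.rfl
  · simp only [mem_neighborFinset, Finset.mem_singleton]
    exact ⟨fun h => absurd h (cs_adj_inr_inr a b), fun h => by simp at h⟩

lemma cs_nbr_inl_ne (hk : 3 ≤ k) (i : Fin k) (hi : i ≠ zv hk) :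
    (cycleStar k l).neighborFinset (Sum.inl i) =
      {Sum.inl (nxt hk i), Sum.inl (prv hk i)} := by
  ext x
  rcases x with j | b
  · rw [mem_neighborFinset, cs_adj_inl_iff hk, Finset.mem_insert, Finset.mem_singleton]
    constructor
    · rintro (rfl | rfl)
      · exact Or.inl rfl
      · exact Or.inr rfl
    · rintro (h | h) <;> [exact Or.inl (Sum.inl_injective h); exact Or.inr (Sum.inl_injective h)]
  · rw [mem_neighborFinset, cs_adj_inl_inr, Finset.mem_insert, Finset.mem_singleton]
    constructor
    · intro h
      exact absurd (Fin.ext h : i = zv hk) hi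
    · rintro (h | h) <;> simp at h

lemma cs_nbr_inl_zv (hk : 3 ≤ k) :
    (cycleStar k l).neighborFinset (Sum.inl (zv hk)) =
      ({Sum.inl (ov hk), Sum.inl (lv hk)} : Finset (CSV k l)) ∪
        Finset.univ.image Sum.inr := by
  have h1 : nxt hk (zv hk) = ov hk := by
    rw [Fin.ext_iff, nxt_val]
    show (if 0 + 1 = k then 0 else 0 + 1) = 1
    split_ifs <;> omega
  have h2 : prv hk (zv hk) = lv hk := by
    rw [Fin.ext_iff, prv_val]
    show (if (0:ℕ) = 0 then k - 1 else 0 - 1) = k - 1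
    simp
  ext x
  rcases x with j | b
  · rw [mem_neighborFinset, cs_adj_inl_iff hk, h1, h2, Finset.mem_union, Finset.mem_insert,
      Finset.mem_singleton]
    constructor
    · rintro (rfl | rfl)
      · exact Or.inl (Or.inl rfl)
      · exact Or.inl (Or.inr rfl)
    · rintro ((h | h) | h)
      · exact Or.inl (Sum.inl_injective h)
      · exact Or.inr (Sum.inl_injective h)
      · rw [Finset.mem_image] at h
        obtain ⟨a, _, ha⟩ := h
        exact absurd ha (by simp)
  · rw [mem_neighborFinset, cs_adj_inl_inr, Finset.mem_union, Finset.mem_image]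
    constructor
    · intro _
      exact Or.inr ⟨b, Finset.mem_univ b, rfl⟩
    · intro _
      rfl

lemma cs_deg_inr (hk : 3 ≤ k) (a : Fin l) :
    (cycleStar k l).degree (Sum.inr a) = 1 := by
  rw [← card_neighborFinset_eq_degree, cs_nbr_inr hk a, Finset.card_singleton]

lemma cs_deg_inl_ne (hk : 3 ≤ k) (i : Fin k) (hi : i ≠ zv hk) :
    (cycleStar k l).degree (Sum.inl i) = 2 := by
  rw [← card_neighborFinset_eq_degree, cs_nbr_inl_ne hk i hi,
    Finset.card_insert_of_notMem (by
      rw [Finset.mem_singleton]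
      intro h
      exact nxt_ne_prv hk i (Sum.inl_injective h)), Finset.card_singleton]

lemma ov_ne_zv (hk : 3 ≤ k) : ov hk ≠ zv hk := by
  rw [Ne, Fin.ext_iff]; show ¬ (1 = 0); omega

lemma lv_ne_zv (hk : 3 ≤ k) : lv hk ≠ zv hk := by
  rw [Ne, Fin.ext_iff]; show ¬ (k - 1 = 0); omega

lemma lv_ne_ov (hk : 3 ≤ k) : lv hk ≠ ov hk := by
  rw [Ne, Fin.ext_iff]; show ¬ (k - 1 = 1); omega

lemma cs_deg_inl_zv (hk : 3 ≤ k) :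
    (cycleStar k l).degree (Sum.inl (zv hk)) = l + 2 := by
  rw [← card_neighborFinset_eq_degree, cs_nbr_inl_zv hk, Finset.card_union_of_disjoint (by
    rw [Finset.disjoint_left]
    rintro x hx hx'
    rw [Finset.mem_insert, Finset.mem_singleton] at hx
    rw [Finset.mem_image] at hx'
    obtain ⟨a, _, ha⟩ := hx'
    rcases hx with rfl | rfl <;> simp at ha)]
  rw [Finset.card_insert_of_notMem (by
    rw [Finset.mem_singleton]
    intro h
    exact lv_ne_ov hk (Sum.inl_injective h.symm)), Finset.card_singleton,
    Finset.card_image_of_injective _ Sum.inr_injective, Finset.card_univ, Fintype.card_fin]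
  omega


lemma cs_sum_cube (hk : 3 ≤ k) :
    ∑ v : CSV k l, ((cycleStar k l).degree v) ^ 3 * ((cycleStar k l).degree v - 1) =
      (l + 2) ^ 3 * (l + 1) + 8 * (k - 1) := by
  rw [Fintype.sum_sum_type]
  have h2 : ∑ a : Fin l, ((cycleStar k l).degree (Sum.inr a)) ^ 3 *
      ((cycleStar k l).degree (Sum.inr a) - 1) = 0 := by
    refine Finset.sum_eq_zero fun a _ => ?_
    rw [cs_deg_inr hk a]
    norm_num
  rw [h2, add_zero]
  have h1 : ∀ i : Fin k, ((cycleStar k l).degree (Sum.inl i)) ^ 3 *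
      ((cycleStar k l).degree (Sum.inl i) - 1) =
        if i = zv hk then (l + 2) ^ 3 * (l + 1) else 8 := by
    intro i
    by_cases hi : i = zv hk
    · rw [if_pos hi, hi, cs_deg_inl_zv hk]
      norm_num
    · rw [if_neg hi, cs_deg_inl_ne hk i hi]
      norm_num
  rw [Finset.sum_congr rfl fun i _ => h1 i,
    ← Finset.add_sum_erase _ _ (Finset.mem_univ (zv hk)), if_pos rfl]
  have h3 : ∀ i ∈ Finset.univ.erase (zv hk),
      (if i = zv hk then (l + 2) ^ 3 * (l + 1) else 8) = 8 := fun i hi =>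
    if_neg (Finset.mem_erase.1 hi).1
  rw [Finset.sum_congr rfl h3, Finset.sum_const,
    Finset.card_erase_of_mem (Finset.mem_univ _), Finset.card_univ, Fintype.card_fin,
    smul_eq_mul]
  omega

lemma cs_inner_zv (hk : 3 ≤ k) :
    ∑ w ∈ (cycleStar k l).neighborFinset (Sum.inl (zv hk)), (cycleStar k l).degree w =
      l + 4 := by
  rw [cs_nbr_inl_zv hk, Finset.sum_union (by
    rw [Finset.disjoint_left]
    rintro x hx hx'
    rw [Finset.mem_insert, Finset.mem_singleton] at hx
    rw [Finset.mem_image] at hx'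
    obtain ⟨a, _, ha⟩ := hx'
    rcases hx with rfl | rfl <;> simp at ha)]
  rw [Finset.sum_insert (by
    rw [Finset.mem_singleton]
    intro h
    exact lv_ne_ov hk (Sum.inl_injective h.symm)), Finset.sum_singleton]
  rw [cs_deg_inl_ne hk _ (ov_ne_zv hk), cs_deg_inl_ne hk _ (lv_ne_zv hk)]
  rw [Finset.sum_image (fun a _ b _ h => Sum.inr_injective h)]
  rw [Finset.sum_congr rfl fun a _ => cs_deg_inr hk a, Finset.sum_const,
    Finset.card_univ, Fintype.card_fin, smul_eq_mul]
  omega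

lemma cs_inner_ne (hk : 3 ≤ k) (i : Fin k) (hi : i ≠ zv hk) :
    ∑ w ∈ (cycleStar k l).neighborFinset (Sum.inl i), (cycleStar k l).degree w =
      (if i = lv hk then l + 2 else 2) + (if i = ov hk then l + 2 else 2) := by
  rw [cs_nbr_inl_ne hk i hi, Finset.sum_insert (by
    rw [Finset.mem_singleton]
    intro h
    exact nxt_ne_prv hk i (Sum.inl_injective h)), Finset.sum_singleton]
  congr 1
  · by_cases h : i = lv hk
    · rw [if_pos h, show nxt hk i = zv hk from (nxt_eq_zv_iff hk i).mpr h, cs_deg_inl_zv hk]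
    · rw [if_neg h, cs_deg_inl_ne hk _ (fun hc => h ((nxt_eq_zv_iff hk i).mp hc))]
  · by_cases h : i = ov hk
    · rw [if_pos h, show prv hk i = zv hk from (prv_eq_zv_iff hk i).mpr h, cs_deg_inl_zv hk]
    · rw [if_neg h, cs_deg_inl_ne hk _ (fun hc => h ((prv_eq_zv_iff hk i).mp hc))]

lemma cs_inner_inr (hk : 3 ≤ k) (a : Fin l) :
    ∑ w ∈ (cycleStar k l).neighborFinset (Sum.inr a), (cycleStar k l).degree w =
      l + 2 := by
  rw [cs_nbr_inr hk a, Finset.sum_singleton, cs_deg_inl_zv hk]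

lemma cs_sum_nbr (hk : 3 ≤ k) :
    ∑ v : CSV k l, (cycleStar k l).degree v *
        ∑ w ∈ (cycleStar k l).neighborFinset v, (cycleStar k l).degree w =
      (l + 2) * (l + 4) + 2 * (l + 4) + 2 * (l + 4) + (k - 3) * 8 + l * (l + 2) := by
  rw [Fintype.sum_sum_type]
  have h2 : ∑ a : Fin l, (cycleStar k l).degree (Sum.inr a) *
      ∑ w ∈ (cycleStar k l).neighborFinset (Sum.inr a), (cycleStar k l).degree w =
        l * (l + 2) := by
    rw [Finset.sum_congr rfl fun a _ => by
      rw [cs_deg_inr hk a, cs_inner_inr hk a, one_mul]]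
    rw [Finset.sum_const, Finset.card_univ, Fintype.card_fin, smul_eq_mul]
  rw [h2]
  have h1 : ∀ i : Fin k, (cycleStar k l).degree (Sum.inl i) *
      ∑ w ∈ (cycleStar k l).neighborFinset (Sum.inl i), (cycleStar k l).degree w =
        if i = zv hk then (l + 2) * (l + 4) else
          if i = ov hk then 2 * (l + 4) else if i = lv hk then 2 * (l + 4) else 8 := by
    intro i
    by_cases hi : i = zv hk
    · rw [if_pos hi, hi, cs_deg_inl_zv hk, cs_inner_zv hk]
    · rw [if_neg hi, cs_deg_inl_ne hk i hi, cs_inner_ne hk i hi]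
      by_cases h1 : i = ov hk
      · have h2 : ¬ (i = lv hk) := fun hc => lv_ne_ov hk (hc.symm.trans h1)
        rw [if_pos h1, if_neg h2, if_pos h1]
        omega
      · by_cases h2 : i = lv hk
        · rw [if_neg h1, if_pos h2, if_pos h2, if_neg h1]
          try omega
        · rw [if_neg h1, if_neg h2, if_neg h2, if_neg h1]
          try omega
  rw [Finset.sum_congr rfl fun i _ => h1 i]
  have hov : ov hk ∈ Finset.univ.erase (zv hk) :=
    Finset.mem_erase.2 ⟨ov_ne_zv hk, Finset.mem_univ _⟩
  have hlv : lv hk ∈ (Finset.univ.erase (zv hk)).erase (ov hk) :=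
    Finset.mem_erase.2 ⟨lv_ne_ov hk, Finset.mem_erase.2 ⟨lv_ne_zv hk, Finset.mem_univ _⟩⟩
  rw [← Finset.add_sum_erase _ _ (Finset.mem_univ (zv hk)), if_pos rfl,
    ← Finset.add_sum_erase _ _ hov]
  rw [if_neg (ov_ne_zv hk), if_pos rfl, ← Finset.add_sum_erase _ _ hlv,
    if_neg (lv_ne_zv hk), if_neg (lv_ne_ov hk), if_pos rfl]
  have h3 : ∀ i ∈ ((Finset.univ.erase (zv hk)).erase (ov hk)).erase (lv hk),
      (if i = zv hk then (l + 2) * (l + 4) else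
        if i = ov hk then 2 * (l + 4) else if i = lv hk then 2 * (l + 4) else 8) = 8 := by
    intro i hi
    rw [Finset.mem_erase, Finset.mem_erase, Finset.mem_erase] at hi
    rw [if_neg hi.2.2.1, if_neg hi.2.1, if_neg hi.1]
  rw [Finset.sum_congr rfl h3, Finset.sum_const, smul_eq_mul,
    Finset.card_erase_of_mem hlv, Finset.card_erase_of_mem hov,
    Finset.card_erase_of_mem (Finset.mem_univ _), Finset.card_univ, Fintype.card_fin]
  omega

lemma cs_key (hk : 3 ≤ k) :
    2 * M2 (Zagreb.lineGraph (subdivision (cycleStar k l))) =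
      ((l + 2) ^ 3 * (l + 1) + 8 * (k - 1)) +
        ((l + 2) * (l + 4) + 2 * (l + 4) + 2 * (l + 4) + (k - 3) * 8 + l * (l + 2)) := by
  rw [key_formula (cycleStar k l), cs_sum_cube hk, cs_sum_nbr hk]

end CycleStarComp

end ZagrebAux

open Zagreb in
theorem stmt7 (n k : ℕ) (hk : 3 ≤ k) (hn : k + 1 ≤ n) :
    (M2 (lineGraph (subdivision (cycleStar k (n - k)))) : ℚ) =
      (1 / 2) * ((n : ℚ) ^ 4 + (7 - 4 * k) * n ^ 3 + (6 * k ^ 2 - 21 * k + 20) * n ^ 2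
        - (4 * (k : ℚ) ^ 3 - 21 * k ^ 2 + 40 * k - 32) * n
        + (k : ℚ) ^ 4 - 7 * k ^ 3 + 20 * k ^ 2 - 16 * k) := by
  set l := n - k with hl
  have hn2 : (n : ℚ) = (k : ℚ) + (l : ℚ) := by
    have h : n = k + l := by omega
    rw [h]
    push_cast
    ring
  have key := ZagrebAux.cs_key (k := k) (l := l) hk
  have h2 : (2 : ℚ) * (M2 (lineGraph (subdivision (cycleStar k l))) : ℚ) =
      (((l : ℚ) + 2) ^ 3 * ((l : ℚ) + 1) + 8 * ((k : ℚ) - 1)) +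
        (((l : ℚ) + 2) * ((l : ℚ) + 4) + 2 * ((l : ℚ) + 4) + 2 * ((l : ℚ) + 4)
          + ((k : ℚ) - 3) * 8 + (l : ℚ) * ((l : ℚ) + 2)) := by
    have h := congrArg (fun m : ℕ => (m : ℚ)) key
    push_cast [Nat.cast_sub (show 1 ≤ k by omega), Nat.cast_sub (show 3 ≤ k by omega)] at h
    linear_combination h
  rw [hn2]
  linear_combination h2 / 2
end
end

section
/- Let k \geq 3, n - k \geq 1, and G = L(S(CS_{k,n-k})). Then the first Zagreb coindex of G is \overline{M_1}(G) = n^3 + (3-k)n^2 - (k^2 - 12k + 18)n + k^3 - 7k^2 + 6k. -/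
open scoped Classical
open Finset

noncomputable section

namespace Zagreb

variable {V : Type*}

/-- lift of a sum of a vertex function to Sym2 -/
def lift2 (h : V → ℕ) : Sym2 V → ℕ :=
  Sym2.lift ⟨fun u v => h u + h v, fun _ _ => add_comm _ _⟩

lemma sum_dart_fst (G : SimpleGraph V) [Fintype V] [DecidableRel G.Adj] (h : V → ℕ) :
    ∑ d : G.Dart, h d.fst = ∑ v, G.degree v * h v := by
  classical
  rw [← Finset.sum_fiberwise (univ : Finset G.Dart) (fun d => d.fst) (fun d => h d.fst)]
  refine Finset.sum_congr rfl fun v _ => ?_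
  rw [Finset.sum_congr rfl (fun d hd => ?_), Finset.sum_const, smul_eq_mul]
  · congr 1
    exact G.dart_fst_fiber_card_eq_degree v
  · simp only [Finset.mem_filter] at hd
    rw [hd.2]

lemma sum_dart_fst_edge (G : SimpleGraph V) [Fintype V] [DecidableRel G.Adj] [Fintype G.edgeSet] (h : V → ℕ) :
    ∑ d : G.Dart, h d.fst = ∑ e ∈ G.edgeFinset, lift2 h e := by
  classical
  rw [← Finset.sum_fiberwise_of_maps_to (g := fun d : G.Dart => d.edge)
    (t := G.edgeFinset) (fun d _ => by rw [SimpleGraph.mem_edgeFinset]; exact d.edge_mem) (fun d => h d.fst)]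
  refine Finset.sum_congr rfl fun e he => ?_
  rw [SimpleGraph.mem_edgeFinset] at he
  induction e using Sym2.ind with
  | _ u v =>
    have hd : ({d : G.Dart | d.edge = s(u, v)} : Finset _) =
        {(⟨(u,v), he⟩ : G.Dart), (⟨(u,v), he⟩ : G.Dart).symm} := by
      have := SimpleGraph.Dart.edge_fiber (⟨(u,v), he⟩ : G.Dart)
      exact this
    rw [hd, Finset.sum_pair (SimpleGraph.Dart.symm_ne _).symm]
    simp [lift2, SimpleGraph.Dart.symm]

lemma sum_edge_lift2 (G : SimpleGraph V) [Fintype V] [DecidableRel G.Adj] [Fintype G.edgeSet] (h : V → ℕ) :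
    ∑ e ∈ G.edgeFinset, lift2 h e = ∑ v, G.degree v * h v := by
  rw [← sum_dart_fst_edge, sum_dart_fst]


lemma lineGraph_degree [Fintype V] (G : SimpleGraph V) (e : G.edgeSet) (u v : V)
    (huv : (e : Sym2 V) = s(u, v)) :
    (lineGraph G).degree e + 2 = G.degree u + G.degree v := by
  classical
  have hne : u ≠ v := by
    have := e.2
    rw [huv, SimpleGraph.mem_edgeSet] at this
    exact this.ne
  have himg : ((lineGraph G).neighborFinset e).image (Subtype.val) =
      (G.incidenceFinset u ∪ G.incidenceFinset v).erase (e : Sym2 V) := by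
    ext a
    simp only [Finset.mem_image, SimpleGraph.mem_neighborFinset, Finset.mem_erase,
      Finset.mem_union, SimpleGraph.mem_incidenceFinset]
    simp only [SimpleGraph.incidenceSet, Set.mem_sep_iff]
    constructor
    · rintro ⟨f, ⟨hfe, w, hw1, hw2⟩, rfl⟩
      refine ⟨fun h => hfe (Subtype.ext h).symm, ?_⟩
      rw [huv, Sym2.mem_iff] at hw1
      rcases hw1 with rfl | rfl
      · exact Or.inl ⟨f.2, hw2⟩
      · exact Or.inr ⟨f.2, hw2⟩
    · rintro ⟨hae, h⟩
      have hedge : a ∈ G.edgeSet := by rcases h with ⟨h, _⟩ | ⟨h, _⟩ <;> exact h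
      refine ⟨⟨a, hedge⟩, ⟨?_, ?_⟩, rfl⟩
      · intro hfe
        exact hae (congrArg Subtype.val hfe.symm)
      · rcases h with ⟨_, hu⟩ | ⟨_, hv⟩
        · exact ⟨u, by rw [huv]; simp, hu⟩
        · exact ⟨v, by rw [huv]; simp, hv⟩
  have hcard : ((lineGraph G).neighborFinset e).card =
      ((G.incidenceFinset u ∪ G.incidenceFinset v).erase (e : Sym2 V)).card := by
    rw [← himg, Finset.card_image_of_injective _ Subtype.val_injective]
  have hinter : G.incidenceFinset u ∩ G.incidenceFinset v = {(e : Sym2 V)} := by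
    ext a
    simp only [Finset.mem_inter, SimpleGraph.mem_incidenceFinset,
      SimpleGraph.incidenceSet, Set.mem_setOf_eq, Finset.mem_singleton, Set.mem_sep_iff]
    constructor
    · rintro ⟨⟨ha, hu⟩, ⟨_, hv⟩⟩
      rw [huv]
      exact (Sym2.mem_and_mem_iff hne).1 ⟨hu, hv⟩
    · rintro rfl
      exact ⟨⟨e.2, by rw [huv]; simp⟩, ⟨e.2, by rw [huv]; simp⟩⟩
  have hemem : (e : Sym2 V) ∈ G.incidenceFinset u ∪ G.incidenceFinset v := by
    rw [Finset.mem_union, SimpleGraph.mem_incidenceFinset]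
    exact Or.inl ⟨e.2, by rw [huv]; simp⟩
  have h1 : ((G.incidenceFinset u ∪ G.incidenceFinset v).erase (e : Sym2 V)).card + 1 =
      (G.incidenceFinset u ∪ G.incidenceFinset v).card :=
    Finset.card_erase_add_one hemem
  have h2 := Finset.card_union_add_card_inter (G.incidenceFinset u) (G.incidenceFinset v)
  rw [hinter, Finset.card_singleton] at h2
  rw [SimpleGraph.degree, hcard]
  rw [G.card_incidenceFinset_eq_degree u, G.card_incidenceFinset_eq_degree v] at h2
  omega


lemma sum_mem_sym2' {M : Type*} [AddCommMonoid M] (z : Sym2 V) (u v : V) (h : V → M)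
    (hz : z = s(u, v)) (hne : u ≠ v) [Fintype V] :
    ∑ w : {w : V // w ∈ z}, h w.val = h u + h v := by
  classical
  subst hz
  rw [← Finset.sum_subtype ({u, v} : Finset V) (fun x => by simp [Sym2.mem_iff]) h]
  exact Finset.sum_pair hne

lemma sum_mem_sym2 {M : Type*} [AddCommMonoid M] (u v : V) (h : V → M) (hne : u ≠ v)
    [Fintype V] :
    ∑ w : {w : V // w ∈ (s(u, v) : Sym2 V)}, h w.val = h u + h v :=
  sum_mem_sym2' _ u v h rfl hne

lemma card_mem_sym2 (u v : V) (hne : u ≠ v) [Fintype V] :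
    Fintype.card {w : V // w ∈ (s(u, v) : Sym2 V)} = 2 := by
  classical
  have := sum_mem_sym2 u v (fun _ => (1 : ℕ)) hne
  rwa [Fintype.card_eq_sum_ones]

lemma subdivision_degree_inl (G : SimpleGraph V) [Fintype V] (v : V) :
    (subdivision G).degree (Sum.inl v) = G.degree v := by
  classical
  rw [← SimpleGraph.card_neighborSet_eq_degree, ← G.card_incidenceSet_eq_degree v]
  refine Fintype.card_congr (Equiv.ofBijective
    (fun a : G.incidenceSet v =>
      (⟨Sum.inr ⟨a.val, a.2.1⟩, a.2.2⟩ : (subdivision G).neighborSet (Sum.inl v)))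
    ⟨?_, ?_⟩).symm
  · rintro ⟨a, ha⟩ ⟨b, hb⟩ hab
    simp only [Subtype.mk.injEq, Sum.inr.injEq] at hab
    have h' : (Sum.inr ⟨a, ha.1⟩ : V ⊕ G.edgeSet) = Sum.inr ⟨b, hb.1⟩ := congrArg Subtype.val hab
    have h'' : (⟨a, ha.1⟩ : G.edgeSet) = ⟨b, hb.1⟩ := Sum.inr_injective h'
    have h3 : a = b := congrArg Subtype.val h''
    exact Subtype.ext h3
  · rintro ⟨(w | f), h⟩
    · exact absurd h (by simp [subdivision, SimpleGraph.neighborSet])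
    · exact ⟨⟨f.val, f.2, h⟩, rfl⟩

lemma subdivision_degree_inr (G : SimpleGraph V) [Fintype V] (f : G.edgeSet) :
    (subdivision G).degree (Sum.inr f) = 2 := by
  classical
  obtain ⟨u, v, hf⟩ : ∃ u v, (f : Sym2 V) = s(u, v) :=
    Sym2.ind (fun u v => ⟨u, v, rfl⟩) (f : Sym2 V)
  have hne : u ≠ v := by
    have h2 := f.2
    rw [hf, SimpleGraph.mem_edgeSet] at h2
    exact h2.ne
  rw [← SimpleGraph.card_neighborSet_eq_degree, ← card_mem_sym2 u v hne]
  refine Fintype.card_congr (Equiv.ofBijective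
    (fun a : {w : V // w ∈ (s(u, v) : Sym2 V)} =>
      (⟨Sum.inl a.val, show a.val ∈ (f : Sym2 V) by rw [hf]; exact a.2⟩ :
        (subdivision G).neighborSet (Sum.inr f)))
    ⟨?_, ?_⟩).symm
  · rintro ⟨a, ha⟩ ⟨b, hb⟩ hab
    simp only [Subtype.mk.injEq, Sum.inl.injEq] at hab
    exact Subtype.ext (Sum.inl_injective (congrArg Subtype.val hab))
  · rintro ⟨(w | g), h⟩
    · exact ⟨⟨w, by rw [← hf]; exact h⟩, rfl⟩
    · exact absurd h (by simp [subdivision, SimpleGraph.neighborSet])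

/-- incidence pairs equiv edges of the subdivision -/
noncomputable def incEquiv (G : SimpleGraph V) :
    (Σ f : G.edgeSet, {v : V // v ∈ (f : Sym2 V)}) ≃ (subdivision G).edgeSet :=
  Equiv.ofBijective
    (fun p => ⟨s(Sum.inl p.2.val, Sum.inr p.1), p.2.2⟩)
    (by
      constructor
      · rintro ⟨f, v, hv⟩ ⟨g, w, hw⟩ hpq
        have hpq' : (s(Sum.inl v, Sum.inr f) : Sym2 (V ⊕ G.edgeSet)) = s(Sum.inl w, Sum.inr g) :=
          congrArg Subtype.val hpq
        rcases Sym2.eq_iff.mp hpq' with ⟨h1, h2⟩ | ⟨h1, h2⟩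
        · obtain rfl : f = g := Sum.inr.inj h2
          obtain rfl : v = w := Sum.inl.inj h1
          rfl
        · exact absurd h1 (by simp)
      · rintro ⟨z, hz⟩
        induction z using Sym2.ind with
        | _ x y =>
          rw [SimpleGraph.mem_edgeSet] at hz
          match x, y, hz with
          | Sum.inl v, Sum.inr f, hz =>
            exact ⟨⟨f, v, hz⟩, rfl⟩
          | Sum.inr f, Sum.inl v, hz =>
            exact ⟨⟨f, v, hz⟩, Subtype.ext (Sym2.eq_swap)⟩)

@[simp] lemma incEquiv_val (G : SimpleGraph V) (p : Σ f : G.edgeSet, {v : V // v ∈ (f : Sym2 V)}) :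
    ((incEquiv G) p : Sym2 (V ⊕ G.edgeSet)) = s(Sum.inl p.2.val, Sum.inr p.1) := rfl


lemma cycleStar_adj_inl_inl {k l : ℕ} (i j : Fin k) :
    (cycleStar k l).Adj (Sum.inl i) (Sum.inl j) ↔
      i ≠ j ∧ ((i.val + 1) % k = j.val ∨ (j.val + 1) % k = i.val) := Iff.rfl

lemma cycleStar_adj_inl_inr {k l : ℕ} (i : Fin k) (b : Fin l) :
    (cycleStar k l).Adj (Sum.inl i) (Sum.inr b) ↔ i.val = 0 := Iff.rfl

lemma cycleStar_adj_inr_inl {k l : ℕ} (a : Fin l) (j : Fin k) :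
    (cycleStar k l).Adj (Sum.inr a) (Sum.inl j) ↔ j.val = 0 := Iff.rfl

lemma cycleStar_adj_inr_inr {k l : ℕ} (a b : Fin l) :
    (cycleStar k l).Adj (Sum.inr a) (Sum.inr b) ↔ False := Iff.rfl

lemma card_filter_sum {α β : Type*} [Fintype α] [Fintype β] (p : α ⊕ β → Prop) :
    #(univ.filter p) = #(univ.filter (fun a => p (Sum.inl a)))
      + #(univ.filter (fun b => p (Sum.inr b))) := by
  classical
  rw [Finset.card_filter, Finset.card_filter, Finset.card_filter, Fintype.sum_sum_type]

lemma mod_succ_eq {k : ℕ} (m : ℕ) (hm : m < k) :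
    (m + 1) % k = if m + 1 = k then 0 else m + 1 := by
  split_ifs with h
  · rw [h, Nat.mod_self]
  · exact Nat.mod_eq_of_lt (by omega)

lemma cycle_filter_card {k l : ℕ} (hk : 3 ≤ k) (i : Fin k) :
    #(univ.filter (fun j : Fin k => (cycleStar k l).Adj (Sum.inl i) (Sum.inl j))) = 2 := by
  classical
  set s1 : ℕ := if i.val + 1 = k then 0 else i.val + 1 with hs1def
  set p1 : ℕ := if i.val = 0 then k - 1 else i.val - 1 with hp1def
  have hik := i.isLt
  have hs1 : s1 < k := by rw [hs1def]; split_ifs <;> omega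
  have hp1 : p1 < k := by rw [hp1def]; split_ifs <;> omega
  have hfil : univ.filter (fun j : Fin k => (cycleStar k l).Adj (Sum.inl i) (Sum.inl j)) =
      {⟨s1, hs1⟩, ⟨p1, hp1⟩} := by
    ext j
    have hjk := j.isLt
    simp only [Finset.mem_filter, Finset.mem_univ, true_and, Finset.mem_insert,
      Finset.mem_singleton, cycleStar_adj_inl_inl, Ne, Fin.ext_iff]
    rw [mod_succ_eq i.val hik, mod_succ_eq j.val hjk]
    rw [hs1def, hp1def]
    constructor
    · rintro ⟨hne, h | h⟩ <;> split_ifs at h ⊢ <;> omega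
    · rintro (h | h) <;> split_ifs at h ⊢ <;> omega
  rw [hfil]
  rw [Finset.card_pair]
  intro h
  rw [Fin.ext_iff] at h
  simp only [hs1def, hp1def] at h
  split_ifs at h <;> omega

lemma cycleStar_degree_inl {k l : ℕ} (hk : 3 ≤ k) (i : Fin k) :
    (cycleStar k l).degree (Sum.inl i) = 2 + if i.val = 0 then l else 0 := by
  classical
  rw [SimpleGraph.degree, SimpleGraph.neighborFinset_eq_filter, card_filter_sum]
  have h1 : #(univ.filter (fun j : Fin k => (cycleStar k l).Adj (Sum.inl i) (Sum.inl j))) = 2 := by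
    exact cycle_filter_card hk i
  have h2 : #(univ.filter (fun b : Fin l => (cycleStar k l).Adj (Sum.inl i) (Sum.inr b))) =
      if i.val = 0 then l else 0 := by
    split_ifs with h <;> simp [cycleStar_adj_inl_inr, h]
  rw [h1, h2]

lemma cycleStar_degree_inr {k l : ℕ} (hk : 3 ≤ k) (a : Fin l) :
    (cycleStar k l).degree (Sum.inr a) = 1 := by
  classical
  rw [SimpleGraph.degree, SimpleGraph.neighborFinset_eq_filter, card_filter_sum]
  have h1 : (univ.filter (fun j : Fin k => (cycleStar k l).Adj (Sum.inr a) (Sum.inl j))) =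
      {(⟨0, by omega⟩ : Fin k)} := by
    ext j
    simp only [Finset.mem_filter, Finset.mem_univ, true_and, Finset.mem_singleton]
    rw [cycleStar_adj_inr_inl, Fin.ext_iff]
  have h2 : (univ.filter (fun b : Fin l => (cycleStar k l).Adj (Sum.inr a) (Sum.inr b))) = ∅ := by
    ext b
    simp [cycleStar_adj_inr_inr]
  rw [h1, h2]
  simp



lemma incEquiv_deg (G : SimpleGraph V) [Fintype V]
    (p : Σ f : G.edgeSet, {v : V // v ∈ (f : Sym2 V)}) :
    (lineGraph (subdivision G)).degree (incEquiv G p) = G.degree p.2.val := by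
  obtain ⟨f, v, hv⟩ := p
  have h := lineGraph_degree (subdivision G) (incEquiv G ⟨f, ⟨v, hv⟩⟩)
    (Sum.inl v) (Sum.inr f) rfl
  rw [subdivision_degree_inl, subdivision_degree_inr] at h
  show _ = G.degree v
  omega

lemma sum_lineGraph_subdivision (G : SimpleGraph V) [Fintype V] (F : ℕ → ℕ) :
    ∑ x : (subdivision G).edgeSet, F ((lineGraph (subdivision G)).degree x)
      = ∑ v, G.degree v * F (G.degree v) := by
  classical
  rw [← Equiv.sum_comp (incEquiv G) (fun x => F ((lineGraph (subdivision G)).degree x))]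
  simp only [incEquiv_deg]
  rw [← Finset.univ_sigma_univ, Finset.sum_sigma]
  have hin : ∀ f : G.edgeSet, (∑ v : {v : V // v ∈ (f : Sym2 V)}, F (G.degree v.val))
      = lift2 (fun v => F (G.degree v)) (f : Sym2 V) := by
    intro f
    obtain ⟨u, v, hf⟩ : ∃ u v, (f : Sym2 V) = s(u, v) :=
      Sym2.ind (fun u v => ⟨u, v, rfl⟩) (f : Sym2 V)
    have hne : u ≠ v := by
      have h2 := f.2
      rw [hf, SimpleGraph.mem_edgeSet] at h2
      exact h2.ne
    rw [sum_mem_sym2' (f : Sym2 V) u v (fun w => F (G.degree w)) hf hne, hf]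
    rfl
  rw [Finset.sum_congr rfl (fun f _ => hin f)]
  rw [Finset.sum_set_coe (s := G.edgeSet) (f := lift2 (fun v => F (G.degree v)))]
  rw [show G.edgeSet.toFinset = G.edgeFinset from rfl]
  exact sum_edge_lift2 G (fun v => F (G.degree v))

lemma card_edgeSet_subdivision (G : SimpleGraph V) [Fintype V] :
    Fintype.card (subdivision G).edgeSet = ∑ v, G.degree v := by
  classical
  rw [Fintype.card_eq_sum_ones]
  have := sum_lineGraph_subdivision G (fun _ => 1)
  simp only [mul_one] at this
  exact this

lemma M1bar_eq (W : Type*) [Fintype W] (H : SimpleGraph W) :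
    M1bar H + ∑ x, H.degree x * (H.degree x)
      = (Fintype.card W - 1) * ∑ x, H.degree x := by
  classical
  have h1 : M1bar H = ∑ x, Hᶜ.degree x * H.degree x := by
    rw [M1bar]
    exact sum_edge_lift2 Hᶜ (fun x => H.degree x)
  rw [h1, ← Finset.sum_add_distrib, Finset.mul_sum]
  refine Finset.sum_congr rfl fun x _ => ?_
  have hc : Hᶜ.degree x = Fintype.card W - 1 - H.degree x := SimpleGraph.degree_compl H x
  have hlt : H.degree x < Fintype.card W := H.degree_lt_card_verts x
  rw [hc]
  have h2 : (Fintype.card W - 1 - H.degree x) + H.degree x = Fintype.card W - 1 := by omega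
  conv_rhs => rw [← h2, Nat.add_mul]

lemma sum_fin_ite (k : ℕ) (hk : 1 ≤ k) (A B : ℕ) :
    ∑ i : Fin k, (if i.val = 0 then A else B) = A + (k - 1) * B := by
  classical
  rw [Finset.sum_ite]
  have h1 : (univ.filter (fun i : Fin k => i.val = 0)) = {(⟨0, hk⟩ : Fin k)} := by
    ext i
    simp [Fin.ext_iff]
  have h2 : #(univ.filter (fun i : Fin k => ¬ i.val = 0)) = k - 1 := by
    rw [Finset.filter_not, Finset.card_sdiff_of_subset (Finset.filter_subset _ _), h1]
    simp
  rw [Finset.sum_const, Finset.sum_const, h1, h2]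
  simp [mul_comm]

lemma cycleStar_sum (k l m : ℕ) (hk : 3 ≤ k) :
    ∑ v, (cycleStar k l).degree v * ((cycleStar k l).degree v) ^ m
      = (l + 2) ^ (m + 1) + (k - 1) * 2 ^ (m + 1) + l := by
  classical
  rw [Fintype.sum_sum_type]
  have h1 : ∀ i : Fin k, (cycleStar k l).degree (Sum.inl i)
        * ((cycleStar k l).degree (Sum.inl i)) ^ m
      = (if i.val = 0 then (l + 2) ^ (m + 1) else 2 ^ (m + 1)) := by
    intro i
    rw [cycleStar_degree_inl hk i]
    split_ifs with h
    · rw [← pow_succ', Nat.add_comm 2 l]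
    · rw [Nat.add_zero, ← pow_succ']
  have h2 : ∀ a : Fin l, (cycleStar k l).degree (Sum.inr a)
        * ((cycleStar k l).degree (Sum.inr a)) ^ m = 1 := by
    intro a
    rw [cycleStar_degree_inr hk a]
    simp
  rw [Finset.sum_congr rfl (fun i _ => h1 i), Finset.sum_congr rfl (fun a _ => h2 a),
    sum_fin_ite k (by omega), Finset.sum_const]
  simp

end Zagreb

open Zagreb in
theorem stmt8 (n k : ℕ) (hk : 3 ≤ k) (hn : k + 1 ≤ n) :
    (M1bar (lineGraph (subdivision (cycleStar k (n - k)))) : ℤ) =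
      (n : ℤ) ^ 3 + (3 - k) * n ^ 2 - (k ^ 2 - 12 * k + 18) * n
        + k ^ 3 - 7 * k ^ 2 + 6 * k := by
  classical
  set l := n - k with hl
  have hl1 : 1 ≤ l := by omega
  have hk3 : 3 ≤ k := hk
  set G₀ := cycleStar k l with hG₀
  set H := lineGraph (subdivision G₀) with hH
  have hS1 : ∑ v, G₀.degree v * (G₀.degree v) ^ 0 = (l + 2) ^ 1 + (k - 1) * 2 ^ 1 + l :=
    cycleStar_sum k l 0 hk3
  have hS2 : ∑ v, G₀.degree v * (G₀.degree v) ^ 1 = (l + 2) ^ 2 + (k - 1) * 2 ^ 2 + l :=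
    cycleStar_sum k l 1 hk3
  have hS3 : ∑ v, G₀.degree v * (G₀.degree v) ^ 2 = (l + 2) ^ 3 + (k - 1) * 2 ^ 3 + l :=
    cycleStar_sum k l 2 hk3
  simp only [pow_zero, mul_one, pow_one] at hS1 hS2 hS3
  have hN : Fintype.card (subdivision G₀).edgeSet = (l + 2) + (k - 1) * 2 + l := by
    rw [card_edgeSet_subdivision, hS1]
  have hD1 : (∑ x : (subdivision G₀).edgeSet, H.degree x)
      = (l + 2) ^ 2 + (k - 1) * 2 ^ 2 + l := by
    have h := sum_lineGraph_subdivision G₀ (fun d => d)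
    rw [h]
    simpa using hS2
  have hD2 : (∑ x : (subdivision G₀).edgeSet, H.degree x * H.degree x)
      = (l + 2) ^ 3 + (k - 1) * 2 ^ 3 + l := by
    have h := sum_lineGraph_subdivision G₀ (fun d => d * d)
    rw [h]
    have : ∀ v : Fin k ⊕ Fin l, G₀.degree v * (G₀.degree v * G₀.degree v)
        = G₀.degree v * G₀.degree v ^ 2 := fun v => by ring
    rw [Finset.sum_congr rfl fun v _ => this v]
    exact hS3
  have hmain := M1bar_eq (subdivision G₀).edgeSet H
  rw [hN, hD2, hD1] at hmain
  have hcast : (M1bar H : ℤ)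
      = (((l + 2) + (k - 1) * 2 + l - 1 : ℕ) : ℤ)
          * (((l + 2) ^ 2 + (k - 1) * 2 ^ 2 + l : ℕ) : ℤ)
        - (((l + 2) ^ 3 + (k - 1) * 2 ^ 3 + l : ℕ) : ℤ) := by
    have h := congrArg (fun t : ℕ => (t : ℤ)) hmain
    push_cast at h ⊢
    omega
  rw [hcast]
  have hnkl : (n : ℤ) = (k : ℤ) + (l : ℤ) := by
    have h : (l : ℤ) = (n : ℤ) - (k : ℤ) := by
      rw [hl]
      push_cast [Nat.cast_sub (by omega : k ≤ n)]
      ring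
    omega
  have hk1 : (1 : ℤ) ≤ (k : ℤ) := by exact_mod_cast Nat.one_le_of_lt hk3
  push_cast [Nat.cast_sub (by omega : 1 ≤ (l + 2) + (k - 1) * 2 + l),
    Nat.cast_sub (by omega : 1 ≤ k)]
  rw [hnkl]
  ring
end
end

section
/- Let k \geq 3, n - k \geq 1, and G = L_c(S(CS_{k,n-k})). Then the number of edges of G equals \frac{1}{2}(n^2 + k^2 + 11n - 7k - 2nk + 4). -/
open scoped Classical
open Finset

noncomputable section

namespace ZagrebAux
open Zagreb

section Aux
variable (k l : ℕ)

abbrev VT := Fin (k+3) ⊕ Fin (l+1)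
abbrev CSg := cycleStar (k+3) (l+1)
abbrev Sg := subdivision (CSg k l)
abbrev WT := (Fin (k+3) ⊕ Fin (l+1)) ⊕ (CSg k l).edgeSet
abbrev LCg := lineCutGraph (Sg k l)

variable {k l}

lemma val_succ (i : Fin (k+3)) : (i + 1).val = (i.val + 1) % (k+3) := by
  rw [Fin.add_def]; congr 1

lemma ne_succ (i : Fin (k+3)) : i ≠ i + 1 := by
  intro h
  have hv := congrArg Fin.val h
  rw [val_succ] at hv
  have hi := i.isLt
  rcases Nat.lt_or_ge (i.val + 1) (k+3) with h1 | h1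
  · rw [Nat.mod_eq_of_lt h1] at hv; omega
  · have h2 : i.val + 1 = k + 3 := by omega
    rw [h2, Nat.mod_self] at hv; omega

lemma ne_succ_succ (j : Fin (k+3)) : j ≠ j + 1 + 1 := by
  intro h
  have hv := congrArg Fin.val h
  rw [val_succ, val_succ] at hv
  have hj := j.isLt
  rcases Nat.lt_or_ge (j.val + 1) (k+3) with h1' | h1'
  · rw [Nat.mod_eq_of_lt h1'] at hv
    rcases Nat.lt_or_ge (j.val + 2) (k+3) with h2' | h2'
    · rw [Nat.mod_eq_of_lt h2'] at hv; omega
    · have h2 : j.val + 2 = k + 3 := by omega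
      rw [h2, Nat.mod_self] at hv; omega
  · have h2 : j.val + 1 = k + 3 := by omega
    rw [h2, Nat.mod_self, Nat.mod_eq_of_lt (by omega)] at hv; omega

lemma cyc_adj (i : Fin (k+3)) : (CSg k l).Adj (Sum.inl i) (Sum.inl (i+1)) := by
  refine ⟨fun h => ne_succ i (by exact_mod_cast h), Or.inl ?_⟩
  rw [val_succ]

/-- the `i`-th cycle edge -/
def cyc (k l : ℕ) (i : Fin (k+3)) : (CSg k l).edgeSet :=
  ⟨s(Sum.inl i, Sum.inl (i+1)), cyc_adj (l := l) i⟩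

/-- the `a`-th spoke (pendant) edge -/
def spk (k l : ℕ) (a : Fin (l+1)) : (CSg k l).edgeSet :=
  ⟨s(Sum.inl 0, Sum.inr a), rfl⟩

lemma cyc_injective : Function.Injective (cyc k l) := by
  intro i j h
  have h' := congrArg Subtype.val h
  simp only [cyc, Sym2.eq, Sym2.rel_iff', Prod.mk.injEq, Prod.swap_prod_mk] at h'
  rcases h' with ⟨h1, _⟩ | ⟨h1, h2⟩
  · exact Sum.inl.inj h1
  · exfalso
    have e1 : i = j + 1 := Sum.inl.inj h1
    have e2 : i + 1 = j := Sum.inl.inj h2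
    exact ne_succ_succ j (by rw [← e1, ← e2])

lemma spk_injective : Function.Injective (spk k l) := by
  intro a b h
  have h' := congrArg Subtype.val h
  simp only [spk, Sym2.eq, Sym2.rel_iff', Prod.mk.injEq, Prod.swap_prod_mk] at h'
  rcases h' with ⟨_, h2⟩ | ⟨h1, _⟩
  · exact Sum.inr.inj h2
  · exact absurd h1 (by simp)

lemma cyc_ne_spk (i : Fin (k+3)) (a : Fin (l+1)) : cyc k l i ≠ spk k l a := by
  intro h
  have h' := congrArg Subtype.val h
  simp only [cyc, spk, Sym2.eq, Sym2.rel_iff', Prod.mk.injEq, Prod.swap_prod_mk] at h'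
  rcases h' with ⟨_, h2⟩ | ⟨h1, _⟩
  · exact absurd h2 (by simp)
  · exact absurd h1 (by simp)

lemma edge_cases (e : (CSg k l).edgeSet) :
    (∃ i, e = cyc k l i) ∨ (∃ a, e = spk k l a) := by
  obtain ⟨e, he⟩ := e
  induction e using Sym2.inductionOn with
  | hf x y =>
    rw [SimpleGraph.mem_edgeSet] at he
    rcases x with i | a <;> rcases y with j | b
    · rcases he with ⟨hne, h | h⟩
      · have hj : j = i + 1 := Fin.ext (by rw [val_succ, h])
        subst hj
        exact Or.inl ⟨i, rfl⟩
      · have hi : i = j + 1 := Fin.ext (by rw [val_succ, h])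
        subst hi
        left; exact ⟨j, Subtype.ext (Sym2.eq_swap)⟩
    · have h0 : i = 0 := Fin.ext he
      subst h0
      exact Or.inr ⟨b, rfl⟩
    · have h0 : j = 0 := Fin.ext he
      subst h0
      right; exact ⟨a, Subtype.ext (Sym2.eq_swap)⟩
    · exact absurd he (by simp [cycleStar])

lemma mem_cyc {w : VT k l} {i : Fin (k+3)} :
    w ∈ (cyc k l i : Sym2 (VT k l)) ↔ w = Sum.inl i ∨ w = Sum.inl (i+1) :=
  Sym2.mem_iff

lemma mem_spk {w : VT k l} {a : Fin (l+1)} :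
    w ∈ (spk k l a : Sym2 (VT k l)) ↔ w = Sum.inl 0 ∨ w = Sum.inr a :=
  Sym2.mem_iff

@[simp] lemma cyc_inj_iff {i j : Fin (k+3)} : cyc k l i = cyc k l j ↔ i = j :=
  cyc_injective.eq_iff
@[simp] lemma spk_inj_iff {a b : Fin (l+1)} : spk k l a = spk k l b ↔ a = b :=
  spk_injective.eq_iff
@[simp] lemma cyc_eq_spk_iff {i : Fin (k+3)} {a : Fin (l+1)} :
    cyc k l i = spk k l a ↔ False := ⟨cyc_ne_spk i a, False.elim⟩
@[simp] lemma spk_eq_cyc_iff {i : Fin (k+3)} {a : Fin (l+1)} :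
    spk k l a = cyc k l i ↔ False := ⟨fun h => cyc_ne_spk i a h.symm, False.elim⟩

-- subdivision adjacency
lemma subdiv_adj_lr {V : Type*} {G : SimpleGraph V} (v : V) (e : G.edgeSet) :
    (subdivision G).Adj (Sum.inl v) (Sum.inr e) ↔ v ∈ (e : Sym2 V) := Iff.rfl
lemma subdiv_adj_rl {V : Type*} {G : SimpleGraph V} (v : V) (e : G.edgeSet) :
    (subdivision G).Adj (Sum.inr e) (Sum.inl v) ↔ v ∈ (e : Sym2 V) := Iff.rfl
lemma subdiv_adj_ll {V : Type*} {G : SimpleGraph V} (v w : V) :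
    ¬ (subdivision G).Adj (Sum.inl v) (Sum.inl w) := fun h => h
lemma subdiv_adj_rr {V : Type*} {G : SimpleGraph V} (e f : G.edgeSet) :
    ¬ (subdivision G).Adj (Sum.inr e) (Sum.inr f) := fun h => h

/-- the central vertex of the subdivision graph -/
def ctr (k l : ℕ) : WT k l := Sum.inl (Sum.inl 0)

/-- the non-subdivision endpoint of a half-edge -/
def Pt (k l : ℕ) : VT k l × Bool → WT k l := fun x =>
  match x with
  | (Sum.inl i, b) => Sum.inl (Sum.inl (i + if b then 1 else 0))
  | (Sum.inr _, false) => Sum.inl (Sum.inl 0)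
  | (Sum.inr a, true) => Sum.inl (Sum.inr a)

/-- the subdivision endpoint of a half-edge -/
def Qt (k l : ℕ) : VT k l × Bool → WT k l := fun x =>
  match x.1 with
  | Sum.inl i => Sum.inr (cyc k l i)
  | Sum.inr a => Sum.inr (spk k l a)

lemma se_mem (x : VT k l × Bool) : (Sg k l).Adj (Pt k l x) (Qt k l x) := by
  rcases x with ⟨i | a, b | b⟩
  · simp [Pt, Qt, subdiv_adj_lr, mem_cyc]
  · simp [Pt, Qt, subdiv_adj_lr, mem_cyc]
  · simp [Pt, Qt, subdiv_adj_lr, mem_spk]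
  · simp [Pt, Qt, subdiv_adj_lr, mem_spk]

/-- enumeration of the edges of the subdivision graph -/
def se (k l : ℕ) (x : VT k l × Bool) : (Sg k l).edgeSet :=
  ⟨s(Pt k l x, Qt k l x), se_mem x⟩

lemma Pt_ne_Qt (x y : VT k l × Bool) : Pt k l x ≠ Qt k l y := by
  rcases x with ⟨i | a, b | b⟩ <;> rcases y with ⟨j | c, b' | b'⟩ <;> simp [Pt, Qt]

lemma Qt_eq_iff (x y : VT k l × Bool) : Qt k l x = Qt k l y ↔ x.1 = y.1 := by
  rcases x with ⟨i | a, b⟩ <;> rcases y with ⟨j | c, b'⟩ <;>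
    simp only [Qt, Sum.inr.injEq, Sum.inl.injEq]
  · constructor
    · intro h; exact cyc_injective h
    · intro h; rw [h]
  · constructor
    · intro h; exact absurd h (cyc_ne_spk _ _)
    · intro h; exact absurd h (by simp)
  · constructor
    · intro h; exact absurd h.symm (cyc_ne_spk _ _)
    · intro h; exact absurd h (by simp)
  · constructor
    · intro h; exact spk_injective h
    · intro h; rw [h]

lemma se_injective : Function.Injective (se k l) := by
  intro x y h
  have h' := congrArg Subtype.val h
  simp only [se, Sym2.eq, Sym2.rel_iff', Prod.mk.injEq, Prod.swap_prod_mk] at h'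
  rcases h' with ⟨h1, h2⟩ | ⟨h1, h2⟩
  · -- Pt x = Pt y, Qt x = Qt y
    have hq : x.1 = y.1 := (Qt_eq_iff x y).mp h2
    rcases x with ⟨u, b⟩; rcases y with ⟨v, b'⟩
    simp only at hq
    subst hq
    rcases u with i | a
    · rcases b <;> rcases b' <;> simp only [Prod.mk.injEq, and_true] <;>
        simp only [Pt, Bool.false_eq_true, if_false, if_true, add_zero,
          Sum.inl.injEq] at h1 ⊢
      · exact absurd h1 (ne_succ i)
      · exact absurd h1.symm (ne_succ i)
    · rcases b <;> rcases b' <;> simp only [Prod.mk.injEq, and_true] <;>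
        simp only [Pt, Bool.false_eq_true, if_false, if_true, Sum.inl.injEq] at h1 ⊢
      · exact absurd h1 (by simp)
      · exact absurd h1 (by simp)
  · exact absurd h1 (Pt_ne_Qt x y)

lemma se_surjective : Function.Surjective (se k l) := by
  rintro ⟨e, he⟩
  induction e using Sym2.inductionOn with
  | hf x y =>
    rw [SimpleGraph.mem_edgeSet] at he
    rcases x with v | f <;> rcases y with w | g
    · exact absurd he (subdiv_adj_ll _ _)
    · -- inl v, inr g
      rw [subdiv_adj_lr] at he
      rcases edge_cases g with ⟨i, rfl⟩ | ⟨a, rfl⟩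
      · rcases mem_cyc.mp he with rfl | rfl
        · exact ⟨(Sum.inl i, false), Subtype.ext (by simp [se, Pt, Qt])⟩
        · exact ⟨(Sum.inl i, true), Subtype.ext (by simp [se, Pt, Qt])⟩
      · rcases mem_spk.mp he with rfl | rfl
        · exact ⟨(Sum.inr a, false), Subtype.ext (by simp [se, Pt, Qt])⟩
        · exact ⟨(Sum.inr a, true), Subtype.ext (by simp [se, Pt, Qt])⟩
    · -- inr f, inl w
      rw [subdiv_adj_rl] at he
      rcases edge_cases f with ⟨i, rfl⟩ | ⟨a, rfl⟩
      · rcases mem_cyc.mp he with rfl | rfl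
        · exact ⟨(Sum.inl i, false), Subtype.ext (by simp [se, Pt, Qt, Sym2.eq_iff])⟩
        · exact ⟨(Sum.inl i, true), Subtype.ext (by simp [se, Pt, Qt, Sym2.eq_iff])⟩
      · rcases mem_spk.mp he with rfl | rfl
        · exact ⟨(Sum.inr a, false), Subtype.ext (by simp [se, Pt, Qt, Sym2.eq_iff])⟩
        · exact ⟨(Sum.inr a, true), Subtype.ext (by simp [se, Pt, Qt, Sym2.eq_iff])⟩
    · exact absurd he (subdiv_adj_rr _ _)

lemma se_bijective : Function.Bijective (se k l) :=
  ⟨se_injective, se_surjective⟩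

lemma mem_se {w : WT k l} {x : VT k l × Bool} :
    w ∈ (se k l x : Sym2 (WT k l)) ↔ w = Pt k l x ∨ w = Qt k l x :=
  Sym2.mem_iff


-- ===== connectivity machinery =====

lemma reach_invariant {α : Type*} {G : SimpleGraph α} (f : α → Prop)
    (hf : ∀ a b, G.Adj a b → (f a ↔ f b)) {x y : α} (h : G.Reachable x y) : f x ↔ f y := by
  obtain ⟨w⟩ := h
  induction w with
  | nil => exact Iff.rfl
  | cons h p ih => exact (hf _ _ h).trans ih

lemma adj_vtx_cyc (i : Fin (k+3)) :
    (Sg k l).Adj (Sum.inl (Sum.inl i)) (Sum.inr (cyc k l i)) :=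
  (subdiv_adj_lr _ _).mpr (mem_cyc.mpr (Or.inl rfl))

lemma adj_vtx1_cyc (i : Fin (k+3)) :
    (Sg k l).Adj (Sum.inl (Sum.inl (i+1))) (Sum.inr (cyc k l i)) :=
  (subdiv_adj_lr _ _).mpr (mem_cyc.mpr (Or.inr rfl))

lemma adj_ctr_spk (a : Fin (l+1)) :
    (Sg k l).Adj (ctr k l) (Sum.inr (spk k l a)) :=
  (subdiv_adj_lr _ _).mpr (mem_spk.mpr (Or.inl rfl))

lemma adj_leaf_spk (a : Fin (l+1)) :
    (Sg k l).Adj (Sum.inl (Sum.inr a)) (Sum.inr (spk k l a)) :=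
  (subdiv_adj_lr _ _).mpr (mem_spk.mpr (Or.inr rfl))

lemma fin_mk_zero (h : 0 < k+3) : (⟨0, h⟩ : Fin (k+3)) = 0 := Fin.ext (by simp)

lemma fin_last_succ (h : k+2 < k+3) : (⟨k+2, h⟩ : Fin (k+3)) + 1 = 0 := by
  apply Fin.ext
  rw [val_succ]
  simp

lemma fin_mk_succ {m : ℕ} (hm : m < k+3) (hm1 : m+1 < k+3) :
    (⟨m, hm⟩ : Fin (k+3)) + 1 = ⟨m+1, hm1⟩ := by
  apply Fin.ext
  rw [val_succ]
  exact Nat.mod_eq_of_lt hm1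

lemma reach_vtx_ctr (m : ℕ) (hm : m < k+3) :
    (Sg k l).Reachable (Sum.inl (Sum.inl (⟨m, hm⟩ : Fin (k+3)))) (ctr k l) := by
  induction m with
  | zero =>
    rw [show (⟨0, hm⟩ : Fin (k+3)) = 0 from fin_mk_zero hm]
    exact SimpleGraph.Reachable.refl _
  | succ n ih =>
    have hn : n < k+3 := by omega
    have h1 : (Sg k l).Adj (Sum.inl (Sum.inl (⟨n+1, hm⟩ : Fin (k+3)))) (Sum.inr (cyc k l ⟨n, hn⟩)) := by
      rw [← fin_mk_succ hn hm]
      exact adj_vtx1_cyc _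
    exact (h1.reachable.trans (adj_vtx_cyc ⟨n, hn⟩).symm.reachable).trans (ih hn)

lemma reach_all (w : WT k l) : (Sg k l).Reachable w (ctr k l) := by
  rcases w with (i | a) | e
  · exact reach_vtx_ctr i.val i.isLt
  · exact (adj_leaf_spk a).reachable.trans (adj_ctr_spk a).reachable.symm
  · rcases edge_cases e with ⟨i, rfl⟩ | ⟨a, rfl⟩
    · exact (adj_vtx_cyc i).reachable.symm.trans (reach_vtx_ctr i.val i.isLt)
    · exact (adj_ctr_spk a).reachable.symm

lemma S_connected : (Sg k l).Connected :=
  (SimpleGraph.connected_iff_exists_forall_reachable _).mpr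
    ⟨ctr k l, fun w => (reach_all w).symm⟩

lemma induce_adj' {s : Set (WT k l)} {a b : WT k l} (ha : a ∈ s) (hb : b ∈ s)
    (h : (Sg k l).Adj a b) : ((Sg k l).induce s).Adj ⟨a, ha⟩ ⟨b, hb⟩ := h

lemma fin_one_ne_zero : (1 : Fin (k+3)) ≠ 0 := by
  intro h
  have hv := congrArg Fin.val h
  rw [Fin.val_one', Nat.mod_eq_of_lt (by omega)] at hv
  simp at hv

/-- invariant for the centre-removal disconnection -/
def fctr (k l : ℕ) : WT k l → Prop
  | Sum.inl (Sum.inl _) => False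
  | Sum.inl (Sum.inr _) => True
  | Sum.inr e => ∃ a : Fin (l+1), (Sum.inr a : VT k l) ∈ (e : Sym2 (VT k l))

@[simp] lemma fctr_vtx (i : Fin (k+3)) : fctr k l (Sum.inl (Sum.inl i)) = False := rfl
@[simp] lemma fctr_leaf (a : Fin (l+1)) : fctr k l (Sum.inl (Sum.inr a)) = True := rfl
@[simp] lemma fctr_edge (e : (CSg k l).edgeSet) :
    fctr k l (Sum.inr e) = ∃ a : Fin (l+1), (Sum.inr a : VT k l) ∈ (e : Sym2 (VT k l)) := rfl

lemma cut_ctr : IsCutVertex (Sg k l) (ctr k l) := by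
  refine ⟨S_connected, ?_⟩
  intro hc
  set s : Set (WT k l) := {u | u ≠ ctr k l} with hs
  have hkey : ∀ (v : VT k l) (e : (CSg k l).edgeSet), v ∈ (e : Sym2 (VT k l)) →
      (Sum.inl v : WT k l) ≠ ctr k l → (fctr k l (Sum.inl v) ↔ fctr k l (Sum.inr e)) := by
    intro v e hv hne
    rcases v with i | a
    · have hi : i ≠ 0 := fun h => hne (by rw [h]; rfl)
      simp only [fctr_vtx, fctr_edge, false_iff]
      rintro ⟨a, ha⟩
      rcases edge_cases e with ⟨i', rfl⟩ | ⟨a', rfl⟩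
      · rcases mem_cyc.mp ha with h | h <;> simp at h
      · rcases mem_spk.mp hv with h | h
        · exact hi (Sum.inl.inj h)
        · simp at h
    · simp only [fctr_leaf, fctr_edge, true_iff]
      exact ⟨a, hv⟩
  have hf : ∀ (x y : s), ((Sg k l).induce s).Adj x y → (fctr k l x.val ↔ fctr k l y.val) := by
    rintro ⟨x, hx⟩ ⟨y, hy⟩ hadj
    have hxy : (Sg k l).Adj x y := hadj
    rcases x with v | e <;> rcases y with w | e'
    · exact absurd hxy (subdiv_adj_ll _ _)
    · exact hkey v e' hxy hx
    · exact (hkey w e hxy hy).symm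
    · exact absurd hxy (subdiv_adj_rr _ _)
  have hleaf : (Sum.inl (Sum.inr (0 : Fin (l+1))) : WT k l) ∈ s := by
    simp [hs, ctr]
  have hvtx1 : (Sum.inl (Sum.inl (1 : Fin (k+3))) : WT k l) ∈ s := by
    simp only [hs, Set.mem_setOf_eq, ctr, ne_eq, Sum.inl.injEq]
    exact fun h => fin_one_ne_zero h
  have hr := hc.preconnected ⟨_, hleaf⟩ ⟨_, hvtx1⟩
  have hiff := reach_invariant (G := (Sg k l).induce s)
    (fun u => fctr k l u.val) (fun a b hab => hf a b hab) hr
  simp only [fctr_leaf, fctr_vtx, iff_false] at hiff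
  exact hiff trivial

lemma cut_spk (a0 : Fin (l+1)) : IsCutVertex (Sg k l) (Sum.inr (spk k l a0)) := by
  refine ⟨S_connected, ?_⟩
  intro hc
  set s : Set (WT k l) := {u | u ≠ Sum.inr (spk k l a0)} with hs
  set f : WT k l → Prop := fun w => w = Sum.inl (Sum.inr a0) with hfdef
  have hkey : ∀ (v : VT k l) (e : (CSg k l).edgeSet), v ∈ (e : Sym2 (VT k l)) →
      e ≠ spk k l a0 → (f (Sum.inl v) ↔ f (Sum.inr e)) := by
    intro v e hv hne
    have hre : ¬ f (Sum.inr e) := by simp [hfdef]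
    refine ⟨fun h => ?_, fun h => absurd h hre⟩
    exfalso
    have hv0 : v = Sum.inr a0 := Sum.inl.inj (by exact h)
    subst hv0
    rcases edge_cases e with ⟨i', rfl⟩ | ⟨a', rfl⟩
    · rcases mem_cyc.mp hv with h' | h' <;> simp at h'
    · rcases mem_spk.mp hv with h' | h'
      · simp at h'
      · exact hne (congrArg (spk k l) (Sum.inr.inj h').symm)
  have hf : ∀ (x y : s), ((Sg k l).induce s).Adj x y → (f x.val ↔ f y.val) := by
    rintro ⟨x, hx⟩ ⟨y, hy⟩ hadj
    have hxy : (Sg k l).Adj x y := hadj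
    rcases x with v | e <;> rcases y with w | e'
    · exact absurd hxy (subdiv_adj_ll _ _)
    · exact hkey v e' hxy (fun h => hy (by rw [h]))
    · exact (hkey w e hxy (fun h => hx (by rw [h]))).symm
    · exact absurd hxy (subdiv_adj_rr _ _)
  have hleaf : (Sum.inl (Sum.inr a0) : WT k l) ∈ s := by simp [hs]
  have hctr : (ctr k l) ∈ s := by simp [hs, ctr]
  have hr := hc.preconnected ⟨_, hleaf⟩ ⟨_, hctr⟩
  have hiff := reach_invariant (G := (Sg k l).induce s)
    (fun u => f u.val) (fun a b hab => hf a b hab) hr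
  simp only [hfdef] at hiff
  exact absurd (hiff.mp trivial) (by simp [ctr])

-- ascending reachability along the cycle, inside an induced subgraph
lemma reach_asc (v : WT k l) :
    ∀ (r : ℕ) (hr : r < k+3) (m : ℕ) (hmr : m ≤ r)
      (hvtx : ∀ j (hj : j < k+3), m ≤ j → j ≤ r →
        (Sum.inl (Sum.inl (⟨j, hj⟩ : Fin (k+3))) : WT k l) ≠ v)
      (hedg : ∀ j (hj : j < k+3), m ≤ j → j < r →
        (Sum.inr (cyc k l (⟨j, hj⟩ : Fin (k+3))) : WT k l) ≠ v),
      ((Sg k l).induce {u | u ≠ v}).Reachable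
        ⟨Sum.inl (Sum.inl ⟨m, by omega⟩), hvtx m (by omega) le_rfl hmr⟩
        ⟨Sum.inl (Sum.inl ⟨r, hr⟩), hvtx r hr hmr le_rfl⟩ := by
  intro r
  induction r with
  | zero =>
    intro hr m hmr hvtx hedg
    have hm0 : m = 0 := by omega
    subst hm0
    exact SimpleGraph.Reachable.refl _
  | succ n ih =>
    intro hr m hmr hvtx hedg
    rcases Nat.lt_or_ge m (n+1) with hlt | hge
    · have hn : n < k+3 := by omega
      have hreach := ih hn m (by omega)
        (fun j hj h1 h2 => hvtx j hj h1 (by omega))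
        (fun j hj h1 h2 => hedg j hj h1 (by omega))
      have hcycmem : (Sum.inr (cyc k l ⟨n, hn⟩) : WT k l) ≠ v :=
        hedg n hn (by omega) (by omega)
      have hv1 : (Sum.inl (Sum.inl (⟨n+1, hr⟩ : Fin (k+3))) : WT k l) ≠ v :=
        hvtx (n+1) hr (by omega) le_rfl
      have hv0 : (Sum.inl (Sum.inl (⟨n, hn⟩ : Fin (k+3))) : WT k l) ≠ v :=
        hvtx n hn (by omega) (by omega)
      have hadj1 := induce_adj' (s := {u | u ≠ v}) hv0 hcycmem (adj_vtx_cyc ⟨n, hn⟩)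
      have hadj2 : ((Sg k l).induce {u | u ≠ v}).Adj
          ⟨Sum.inl (Sum.inl (⟨n+1, hr⟩ : Fin (k+3))), hv1⟩ ⟨Sum.inr (cyc k l ⟨n, hn⟩), hcycmem⟩ := by
        apply induce_adj'
        rw [← fin_mk_succ hn hr]
        exact adj_vtx1_cyc _
      exact hreach.trans (hadj1.reachable.trans hadj2.reachable.symm)
    · have hm1 : m = n+1 := by omega
      subst hm1
      exact SimpleGraph.Reachable.refl _

/-- descending to the centre -/
lemma reach_ctr_desc0 (v : WT k l) (hctr : (ctr k l : WT k l) ≠ v) (m : ℕ) (hm : m < k+3)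
    (hvtx : ∀ j (hj : j < k+3), j ≤ m →
      (Sum.inl (Sum.inl (⟨j, hj⟩ : Fin (k+3))) : WT k l) ≠ v)
    (hedg : ∀ j (hj : j < k+3), j < m →
      (Sum.inr (cyc k l (⟨j, hj⟩ : Fin (k+3))) : WT k l) ≠ v) :
    ((Sg k l).induce {u | u ≠ v}).Reachable
      ⟨Sum.inl (Sum.inl ⟨m, hm⟩), hvtx m hm le_rfl⟩ ⟨ctr k l, hctr⟩ := by
  have h := (reach_asc v m hm 0 (by omega)
    (fun j hj h1 h2 => hvtx j hj h2)
    (fun j hj h1 h2 => hedg j hj h2)).symm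
  have h0 : (⟨Sum.inl (Sum.inl (⟨0, by omega⟩ : Fin (k+3))), by
        exact hvtx 0 (by omega) (by omega)⟩ :
      {u : WT k l // u ≠ v}) = ⟨ctr k l, hctr⟩ := by
    apply Subtype.ext
    simp [ctr, fin_mk_zero]
  rw [h0] at h
  exact h

/-- ascending (wrapping around the top) to the centre -/
lemma reach_ctr_wrap (v : WT k l) (hctr : (ctr k l : WT k l) ≠ v) (m : ℕ) (hm : m < k+3)
    (hvtx : ∀ j (hj : j < k+3), m ≤ j →
      (Sum.inl (Sum.inl (⟨j, hj⟩ : Fin (k+3))) : WT k l) ≠ v)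
    (hedg : ∀ j (hj : j < k+3), m ≤ j →
      (Sum.inr (cyc k l (⟨j, hj⟩ : Fin (k+3))) : WT k l) ≠ v) :
    ((Sg k l).induce {u | u ≠ v}).Reachable
      ⟨Sum.inl (Sum.inl ⟨m, hm⟩), hvtx m hm le_rfl⟩ ⟨ctr k l, hctr⟩ := by
  have htop : m ≤ k+2 := by omega
  have h1 := reach_asc v (k+2) (by omega) m htop
    (fun j hj hj1 hj2 => hvtx j hj hj1)
    (fun j hj hj1 hj2 => hedg j hj hj1)
  -- now step from vtx (k+2) through cyc (k+2) to vtx 0 = ctr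
  have hlast : (Sum.inr (cyc k l (⟨k+2, by omega⟩ : Fin (k+3))) : WT k l) ≠ v :=
    hedg (k+2) (by omega) htop
  have hvl : (Sum.inl (Sum.inl (⟨k+2, by omega⟩ : Fin (k+3))) : WT k l) ≠ v :=
    hvtx (k+2) (by omega) htop
  have hadj1 := induce_adj' (s := {u | u ≠ v}) hvl hlast (adj_vtx_cyc _)
  have hadj2 : ((Sg k l).induce {u | u ≠ v}).Adj
      ⟨ctr k l, hctr⟩ ⟨Sum.inr (cyc k l (⟨k+2, by omega⟩ : Fin (k+3))), hlast⟩ := by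
    apply induce_adj'
    show (Sg k l).Adj (Sum.inl (Sum.inl 0)) _
    rw [← fin_last_succ (by omega : k+2 < k+3)]
    exact adj_vtx1_cyc _
  exact h1.trans (hadj1.reachable.trans hadj2.reachable.symm)

lemma reach_spk_ctr (v : WT k l) (hctr : (ctr k l : WT k l) ≠ v) (a : Fin (l+1))
    (hsp : (Sum.inr (spk k l a) : WT k l) ≠ v) :
    ((Sg k l).induce {u | u ≠ v}).Reachable ⟨Sum.inr (spk k l a), hsp⟩ ⟨ctr k l, hctr⟩ :=
  (induce_adj' hctr hsp (adj_ctr_spk a)).reachable.symm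

lemma reach_leaf_ctr (v : WT k l) (hctr : (ctr k l : WT k l) ≠ v) (a : Fin (l+1))
    (hlf : (Sum.inl (Sum.inr a) : WT k l) ≠ v)
    (hsp : (Sum.inr (spk k l a) : WT k l) ≠ v) :
    ((Sg k l).induce {u | u ≠ v}).Reachable ⟨Sum.inl (Sum.inr a), hlf⟩ ⟨ctr k l, hctr⟩ :=
  (induce_adj' hlf hsp (adj_leaf_spk a)).reachable.trans (reach_spk_ctr v hctr a hsp)

lemma notcut_vtx (i0 : Fin (k+3)) (hi0 : i0 ≠ 0) :
    ((Sg k l).induce {u | u ≠ Sum.inl (Sum.inl i0)}).Connected := by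
  have hctr : (ctr k l : WT k l) ≠ Sum.inl (Sum.inl i0) := by
    simp only [ctr, ne_eq, Sum.inl.injEq]
    exact fun h => hi0 h.symm
  rw [SimpleGraph.connected_iff_exists_forall_reachable]
  refine ⟨⟨ctr k l, hctr⟩, ?_⟩
  suffices h : ∀ (w : WT k l) (hw : w ≠ Sum.inl (Sum.inl i0)),
      ((Sg k l).induce {u | u ≠ Sum.inl (Sum.inl i0)}).Reachable ⟨w, hw⟩ ⟨ctr k l, hctr⟩ by
    rintro ⟨w, hw⟩
    exact (h w hw).symm
  have hvtxne : ∀ (m : ℕ) (hm : m < k+3), m ≠ i0.val →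
      (Sum.inl (Sum.inl (⟨m, hm⟩ : Fin (k+3))) : WT k l) ≠ Sum.inl (Sum.inl i0) := by
    intro m hm hne h
    exact hne (congrArg Fin.val (Sum.inl.inj (Sum.inl.inj h)))
  have hvtxreach : ∀ (m : ℕ) (hm : m < k+3) (hne : m ≠ i0.val),
      ((Sg k l).induce {u | u ≠ Sum.inl (Sum.inl i0)}).Reachable
        ⟨Sum.inl (Sum.inl ⟨m, hm⟩), hvtxne m hm hne⟩ ⟨ctr k l, hctr⟩ := by
    intro m hm hne
    rcases Nat.lt_or_ge m i0.val with hlt | hge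
    · exact reach_ctr_desc0 _ hctr m hm
        (fun j hj hjm => hvtxne j hj (by omega))
        (fun j hj hjm => by simp)
    · exact reach_ctr_wrap _ hctr m hm
        (fun j hj hjm => hvtxne j hj (by omega))
        (fun j hj hjm => by simp)
  intro w hw
  rcases w with (i | a) | e
  · have hne : i.val ≠ i0.val := fun h => hw (by
      rw [show i = i0 from Fin.ext h])
    exact hvtxreach i.val i.isLt hne
  · exact reach_leaf_ctr _ hctr a hw (by simp)
  · rcases edge_cases e with ⟨i, rfl⟩ | ⟨a, rfl⟩
    · by_cases hii : i = i0
      · subst hii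
        have hne1 : (i+1).val ≠ i.val := fun h => ne_succ i (Fin.ext h.symm)
        have hv1 : (Sum.inl (Sum.inl (i+1)) : WT k l) ≠ Sum.inl (Sum.inl i) :=
          fun h => (ne_succ i) (Sum.inl.inj (Sum.inl.inj h)).symm
        have hadj := induce_adj' (s := {u | u ≠ Sum.inl (Sum.inl i)}) hv1 hw (adj_vtx1_cyc i)
        exact hadj.reachable.symm.trans (hvtxreach (i+1).val (i+1).isLt hne1)
      · have hnei : i.val ≠ i0.val := fun h => hii (Fin.ext h)
        have hvi : (Sum.inl (Sum.inl i) : WT k l) ≠ Sum.inl (Sum.inl i0) :=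
          fun h => hii (Sum.inl.inj (Sum.inl.inj h))
        have hadj := induce_adj' (s := {u | u ≠ Sum.inl (Sum.inl i0)}) hvi hw (adj_vtx_cyc i)
        exact hadj.reachable.symm.trans (hvtxreach i.val i.isLt hnei)
    · exact reach_spk_ctr _ hctr a hw

lemma notcut_leaf (a0 : Fin (l+1)) :
    ((Sg k l).induce {u | u ≠ Sum.inl (Sum.inr a0)}).Connected := by
  have hctr : (ctr k l : WT k l) ≠ Sum.inl (Sum.inr a0) := by simp [ctr]
  rw [SimpleGraph.connected_iff_exists_forall_reachable]
  refine ⟨⟨ctr k l, hctr⟩, ?_⟩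
  suffices h : ∀ (w : WT k l) (hw : w ≠ Sum.inl (Sum.inr a0)),
      ((Sg k l).induce {u | u ≠ Sum.inl (Sum.inr a0)}).Reachable ⟨w, hw⟩ ⟨ctr k l, hctr⟩ by
    rintro ⟨w, hw⟩
    exact (h w hw).symm
  have hvtxreach : ∀ (m : ℕ) (hm : m < k+3),
      ((Sg k l).induce {u | u ≠ Sum.inl (Sum.inr a0)}).Reachable
        ⟨Sum.inl (Sum.inl ⟨m, hm⟩), by simp⟩ ⟨ctr k l, hctr⟩ := by
    intro m hm
    exact reach_ctr_desc0 _ hctr m hm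
      (fun j hj hjm => by simp) (fun j hj hjm => by simp)
  intro w hw
  rcases w with (i | a) | e
  · exact hvtxreach i.val i.isLt
  · exact reach_leaf_ctr _ hctr a hw (by simp)
  · rcases edge_cases e with ⟨i, rfl⟩ | ⟨a, rfl⟩
    · have hvi : (Sum.inl (Sum.inl i) : WT k l) ≠ Sum.inl (Sum.inr a0) := by simp
      have hadj := induce_adj' (s := {u | u ≠ Sum.inl (Sum.inr a0)}) hvi hw (adj_vtx_cyc i)
      exact hadj.reachable.symm.trans (hvtxreach i.val i.isLt)
    · exact reach_spk_ctr _ hctr a hw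

lemma notcut_cyc (i0 : Fin (k+3)) :
    ((Sg k l).induce {u | u ≠ Sum.inr (cyc k l i0)}).Connected := by
  have hctr : (ctr k l : WT k l) ≠ Sum.inr (cyc k l i0) := by simp [ctr]
  rw [SimpleGraph.connected_iff_exists_forall_reachable]
  refine ⟨⟨ctr k l, hctr⟩, ?_⟩
  suffices h : ∀ (w : WT k l) (hw : w ≠ Sum.inr (cyc k l i0)),
      ((Sg k l).induce {u | u ≠ Sum.inr (cyc k l i0)}).Reachable ⟨w, hw⟩ ⟨ctr k l, hctr⟩ by
    rintro ⟨w, hw⟩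
    exact (h w hw).symm
  have hvtxreach : ∀ (m : ℕ) (hm : m < k+3),
      ((Sg k l).induce {u | u ≠ Sum.inr (cyc k l i0)}).Reachable
        ⟨Sum.inl (Sum.inl ⟨m, hm⟩), by simp⟩ ⟨ctr k l, hctr⟩ := by
    intro m hm
    rcases le_or_gt m i0.val with hle | hgt
    · exact reach_ctr_desc0 _ hctr m hm
        (fun j hj hjm => by simp)
        (fun j hj hjm => by
          simp only [ne_eq, Sum.inr.injEq, cyc_inj_iff]
          intro h
          have hj' : i0.val = j := by rw [← h]
          omega)
    · exact reach_ctr_wrap _ hctr m hm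
        (fun j hj hjm => by simp)
        (fun j hj hjm => by
          simp only [ne_eq, Sum.inr.injEq, cyc_inj_iff]
          intro h
          have hj' : i0.val = j := by rw [← h]
          omega)
  intro w hw
  rcases w with (i | a) | e
  · exact hvtxreach i.val i.isLt
  · exact reach_leaf_ctr _ hctr a hw (by simp)
  · rcases edge_cases e with ⟨i, rfl⟩ | ⟨a, rfl⟩
    · have hvi : (Sum.inl (Sum.inl i) : WT k l) ≠ Sum.inr (cyc k l i0) := by simp
      have hadj := induce_adj' (s := {u | u ≠ Sum.inr (cyc k l i0)}) hvi hw (adj_vtx_cyc i)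
      exact hadj.reachable.symm.trans (hvtxreach i.val i.isLt)
    · exact reach_spk_ctr _ hctr a hw

lemma not_cut (v : WT k l) (h1 : v ≠ ctr k l)
    (h2 : ∀ a, v ≠ Sum.inr (spk k l a)) : ¬ IsCutVertex (Sg k l) v := by
  rintro ⟨_, hdisc⟩
  apply hdisc
  rcases v with (i0 | a0) | e0
  · exact notcut_vtx i0 (fun h => h1 (by rw [h]; rfl))
  · exact notcut_leaf a0
  · rcases edge_cases e0 with ⟨i0, rfl⟩ | ⟨a0, rfl⟩
    · exact notcut_cyc i0
    · exact absurd rfl (h2 a0)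

/-- cut-vertex coding -/
def cv (k l : ℕ) : Option (Fin (l+1)) → WT k l
  | none => ctr k l
  | some a => Sum.inr (spk k l a)

lemma cv_cut (c : Option (Fin (l+1))) : IsCutVertex (Sg k l) (cv k l c) := by
  cases c
  · exact cut_ctr
  · exact cut_spk _

def cutFun (k l : ℕ) (c : Option (Fin (l+1))) : {v : WT k l // IsCutVertex (Sg k l) v} :=
  ⟨cv k l c, cv_cut c⟩

lemma cv_injective : Function.Injective (cv k l) := by
  intro c d h
  cases c <;> cases d <;> simp only [cv, ctr] at h
  · rfl
  · exact absurd h (by simp)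
  · exact absurd h (by simp)
  · rw [Sum.inr.injEq] at h
    exact congrArg some (spk_injective h)

lemma cutFun_bijective : Function.Bijective (cutFun k l) := by
  constructor
  · intro c d h
    exact cv_injective (congrArg Subtype.val h)
  · rintro ⟨v, hv⟩
    by_cases h1 : v = ctr k l
    · exact ⟨none, Subtype.ext h1.symm⟩
    · by_cases h2 : ∃ a, v = Sum.inr (spk k l a)
      · obtain ⟨a, ha⟩ := h2
        exact ⟨some a, Subtype.ext ha.symm⟩
      · push_neg at h2
        exact absurd hv (not_cut v h1 h2)

abbrev TT (k l : ℕ) := ((Fin (k+3) ⊕ Fin (l+1)) × Bool) ⊕ Option (Fin (l+1))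

def phi (k l : ℕ) : TT k l ≃ ((Sg k l).edgeSet ⊕ {v : WT k l // IsCutVertex (Sg k l) v}) :=
  Equiv.sumCongr (Equiv.ofBijective _ se_bijective) (Equiv.ofBijective _ cutFun_bijective)

abbrev HG (k l : ℕ) : SimpleGraph (TT k l) := (LCg k l).comap (phi k l).toEmbedding

def isoHL (k l : ℕ) : HG k l ≃g LCg k l := SimpleGraph.Iso.comap (phi k l) (LCg k l)

lemma card_edge_transfer :
    (LCg k l).edgeFinset.card = (HG k l).edgeFinset.card := by
  rw [SimpleGraph.edgeFinset_card, SimpleGraph.edgeFinset_card]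
  exact (Fintype.card_congr (isoHL k l).mapEdgeSet).symm

-- adjacency characterizations in HG
lemma adj_ee (x y : VT k l × Bool) :
    (HG k l).Adj (Sum.inl x) (Sum.inl y) ↔ x ≠ y ∧ (Pt k l x = Pt k l y ∨ Qt k l x = Qt k l y) := by
  have h0 : (HG k l).Adj (Sum.inl x) (Sum.inl y) ↔
      (se k l x ≠ se k l y ∧
        ∃ v, v ∈ (se k l x : Sym2 (WT k l)) ∧ v ∈ (se k l y : Sym2 (WT k l))) := Iff.rfl
  rw [h0, se_injective.ne_iff]
  constructor
  · rintro ⟨hne, v, hvx, hvy⟩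
    refine ⟨hne, ?_⟩
    rcases mem_se.mp hvx with rfl | rfl <;> rcases mem_se.mp hvy with h | h
    · exact Or.inl h
    · exact absurd h (Pt_ne_Qt x y)
    · exact absurd h.symm (Pt_ne_Qt y x)
    · exact Or.inr h
  · rintro ⟨hne, h | h⟩
    · exact ⟨hne, Pt k l x, mem_se.mpr (Or.inl rfl), mem_se.mpr (Or.inl h)⟩
    · exact ⟨hne, Qt k l x, mem_se.mpr (Or.inr rfl), mem_se.mpr (Or.inr h)⟩

lemma adj_ec (x : VT k l × Bool) (c : Option (Fin (l+1))) :
    (HG k l).Adj (Sum.inl x) (Sum.inr c) ↔ (cv k l c = Pt k l x ∨ cv k l c = Qt k l x) := by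
  have h0 : (HG k l).Adj (Sum.inl x) (Sum.inr c) ↔
      (cv k l c ∈ (se k l x : Sym2 (WT k l))) := Iff.rfl
  rw [h0, mem_se]

lemma adj_cc (c d : Option (Fin (l+1))) :
    ¬ (HG k l).Adj (Sum.inr c) (Sum.inr d) := fun h => h

lemma adj_cc' (c d : Option (Fin (l+1))) :
    (HG k l).Adj (Sum.inr c) (Sum.inr d) ↔ False := ⟨adj_cc c d, False.elim⟩


-- value simp lemmas
@[simp] lemma Pt_inl_false (i : Fin (k+3)) :
    Pt k l (Sum.inl i, false) = Sum.inl (Sum.inl i) := by simp [Pt]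
@[simp] lemma Pt_inl_true (i : Fin (k+3)) :
    Pt k l (Sum.inl i, true) = Sum.inl (Sum.inl (i + 1)) := rfl
@[simp] lemma Pt_inr_false (a : Fin (l+1)) :
    Pt k l (Sum.inr a, false) = Sum.inl (Sum.inl 0) := rfl
@[simp] lemma Pt_inr_true (a : Fin (l+1)) :
    Pt k l (Sum.inr a, true) = Sum.inl (Sum.inr a) := rfl
@[simp] lemma Qt_inl (i : Fin (k+3)) (b : Bool) :
    Qt k l (Sum.inl i, b) = Sum.inr (cyc k l i) := rfl
@[simp] lemma Qt_inr (a : Fin (l+1)) (b : Bool) :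
    Qt k l (Sum.inr a, b) = Sum.inr (spk k l a) := rfl
@[simp] lemma cv_none' : cv k l none = Sum.inl (Sum.inl 0) := rfl
@[simp] lemma cv_some' (a : Fin (l+1)) : cv k l (some a) = Sum.inr (spk k l a) := rfl

lemma sub_one_ne (i : Fin (k+3)) : i - 1 ≠ i := by
  intro h
  have : i - 1 + 1 = i := sub_add_cancel i 1
  exact ne_succ (i - 1) (by rw [h] at this ⊢; exact this.symm)

lemma addone_eq_iff {j i : Fin (k+3)} : j + 1 = i ↔ j = i - 1 :=
  ⟨fun h => by rw [← h]; rw [add_sub_cancel_right], fun h => by rw [h, sub_add_cancel]⟩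

lemma zero_eq_addone_iff {x : Fin (k+3)} : (0 = x + 1) ↔ x = -1 := by
  rw [eq_comm, addone_eq_iff, zero_sub]

lemma adj_ce (c : Option (Fin (l+1))) (x : VT k l × Bool) :
    (HG k l).Adj (Sum.inr c) (Sum.inl x) ↔ (cv k l c = Pt k l x ∨ cv k l c = Qt k l x) := by
  rw [SimpleGraph.adj_comm]; exact adj_ec x c

lemma degree_eq_sum (t : TT k l) :
    (HG k l).degree t = ∑ y : TT k l, if (HG k l).Adj t y then 1 else 0 := by
  rw [SimpleGraph.degree, SimpleGraph.neighborFinset_eq_filter, Finset.card_filter]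

lemma sum_ite_or_two {m : ℕ} (c d : Fin m) (h : c ≠ d) :
    (∑ j : Fin m, if (j = c ∨ j = d) then 1 else 0) = 2 := by
  rw [← Finset.card_filter]
  rw [show (univ.filter fun j => j = c ∨ j = d) = {c, d} by ext j; simp]
  rw [Finset.card_insert_of_notMem (by simp [h]), Finset.card_singleton]

lemma sum_ite_ne {m : ℕ} (c : Fin (m+1)) :
    (∑ j : Fin (m+1), if j ≠ c then 1 else 0) = m := by
  rw [← Finset.card_filter, Finset.filter_ne', Finset.card_erase_of_mem (mem_univ c)]
  simp


lemma card_filter_A (i : Fin (k+3)) :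
    #(filter (fun x => i = x + 1 ∨ i = x) univ) = 2 := by
  rw [show (filter (fun x => i = x + 1 ∨ i = x) univ) = {i - 1, i} by
    ext x
    simp only [Finset.mem_filter, mem_univ, true_and, Finset.mem_insert, Finset.mem_singleton]
    constructor
    · rintro (h | h)
      · exact Or.inl (by rw [← addone_eq_iff, h])
      · exact Or.inr h.symm
    · rintro (h | h)
      · exact Or.inl (addone_eq_iff.mpr h).symm
      · exact Or.inr h.symm]
  rw [Finset.card_insert_of_notMem (by simp [sub_one_ne i]), Finset.card_singleton]

lemma card_filter_B (i : Fin (k+3)) :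
    #(filter (fun x => i = x - 1 ∨ i = x) univ) = 2 := by
  rw [show (filter (fun x => i = x - 1 ∨ i = x) univ) = {i + 1, i} by
    ext x
    simp only [Finset.mem_filter, mem_univ, true_and, Finset.mem_insert, Finset.mem_singleton]
    constructor
    · rintro (h | h)
      · left; rw [h, sub_add_cancel]
      · exact Or.inr h.symm
    · rintro (h | h)
      · left; rw [h, add_sub_cancel_right]
      · exact Or.inr h.symm]
  rw [Finset.card_insert_of_notMem (by simp [(ne_succ i).symm]), Finset.card_singleton]

lemma card_filter_C :
    #(filter (fun x : Fin (k+3) => 0 = x + 1) univ) = 1 := by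
  rw [show (filter (fun x : Fin (k+3) => 0 = x + 1) univ) = {(0 : Fin (k+3)) - 1} by
    ext x
    simp only [Finset.mem_filter, mem_univ, true_and, Finset.mem_singleton]
    constructor
    · intro h; rw [← addone_eq_iff, h]
    · intro h; exact (addone_eq_iff.mpr h).symm]
  rfl

lemma sum_ite_D {m : ℕ} (a : Fin (m+1)) :
    (∑ x : Fin (m+1), if a = x then 0 else 1) = m := by
  have h : ∀ x : Fin (m+1), (if a = x then (0:ℕ) else 1) = if x ≠ a then 1 else 0 := by
    intro x
    by_cases hx : a = x
    · simp [hx]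
    · simp [hx, Ne.symm hx]
  rw [Finset.sum_congr rfl fun x _ => h x, sum_ite_ne]

-- degrees
lemma deg_CE (i : Fin (k+3)) (b : Bool) :
    (HG k l).degree (Sum.inl (Sum.inl i, b)) =
      2 + (if i + (if b then 1 else 0) = 0 then l + 2 else 0) := by
  rcases b with _ | _
  case false =>
    rw [degree_eq_sum, Fintype.sum_sum_type]
    rw [Fintype.sum_prod_type]
    rw [Fintype.sum_sum_type]
    rw [Fintype.sum_option]
    simp only [Fintype.sum_bool]
    simp only [adj_ce, adj_cc', adj_ee, adj_ec]
    simp [Finset.sum_add_distrib, Finset.sum_ite_eq, addone_eq_iff]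
    rw [card_filter_A]
    by_cases h : i = 0 <;> simp [h, eq_comm] <;> omega
  case true =>
    rw [degree_eq_sum, Fintype.sum_sum_type]
    rw [Fintype.sum_prod_type]
    rw [Fintype.sum_sum_type]
    rw [Fintype.sum_option]
    simp only [Fintype.sum_bool]
    simp only [adj_ce, adj_cc', adj_ee, adj_ec]
    simp [Finset.sum_add_distrib, Finset.sum_ite_eq, addone_eq_iff]
    rw [card_filter_B]
    by_cases h : i = -1 <;> simp [h, eq_comm, zero_eq_addone_iff] <;> omega

lemma deg_SPf (a : Fin (l+1)) :
    (HG k l).degree (Sum.inl (Sum.inr a, false)) = l + 5 := by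
  rw [degree_eq_sum, Fintype.sum_sum_type]
  rw [Fintype.sum_prod_type]
  rw [Fintype.sum_sum_type]
  rw [Fintype.sum_option]
  simp only [Fintype.sum_bool]
  simp only [adj_ce, adj_cc', adj_ee, adj_ec]
  simp [Finset.sum_add_distrib, Finset.sum_ite_eq, addone_eq_iff]
  rw [card_filter_C, sum_ite_D]
  omega

lemma deg_SPt (a : Fin (l+1)) :
    (HG k l).degree (Sum.inl (Sum.inr a, true)) = 2 := by
  rw [degree_eq_sum, Fintype.sum_sum_type]
  rw [Fintype.sum_prod_type]
  rw [Fintype.sum_sum_type]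
  rw [Fintype.sum_option]
  simp only [Fintype.sum_bool]
  simp only [adj_ce, adj_cc', adj_ee, adj_ec]
  simp [Finset.sum_add_distrib, Finset.sum_ite_eq, addone_eq_iff]

lemma deg_C0 : (HG k l).degree (Sum.inr (none : Option (Fin (l+1)))) = l + 3 := by
  rw [degree_eq_sum, Fintype.sum_sum_type]
  rw [Fintype.sum_prod_type]
  rw [Fintype.sum_sum_type]
  rw [Fintype.sum_option]
  simp only [Fintype.sum_bool]
  simp only [adj_ce, adj_cc', adj_ee, adj_ec]
  simp [Finset.sum_add_distrib, Finset.sum_ite_eq, addone_eq_iff]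
  rw [card_filter_C]
  omega

lemma deg_CA (a : Fin (l+1)) : (HG k l).degree (Sum.inr (some a)) = 2 := by
  rw [degree_eq_sum, Fintype.sum_sum_type]
  rw [Fintype.sum_prod_type]
  rw [Fintype.sum_sum_type]
  rw [Fintype.sum_option]
  simp only [Fintype.sum_bool]
  simp only [adj_ce, adj_cc', adj_ee, adj_ec]
  simp [Finset.sum_add_distrib, Finset.sum_ite_eq, addone_eq_iff]

lemma main_count (k l : ℕ) :
    (lineCutGraph (subdivision (cycleStar (k+3) (l+1)))).edgeFinset.card * 2 =
      l^2 + 13*l + 4*k + 28 := by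
  show (LCg k l).edgeFinset.card * 2 = _
  rw [card_edge_transfer]
  rw [Nat.mul_comm, ← SimpleGraph.sum_degrees_eq_twice_card_edges]
  rw [Fintype.sum_sum_type, Fintype.sum_prod_type, Fintype.sum_sum_type, Fintype.sum_option]
  simp only [Fintype.sum_bool, deg_CE, deg_SPf, deg_SPt, deg_C0, deg_CA]
  simp [Finset.sum_add_distrib, Finset.sum_ite_eq', addone_eq_iff, Finset.sum_const,
    Finset.card_univ, zero_eq_addone_iff]
  ring_nf

end Aux
end ZagrebAux

open Zagreb in
theorem stmt12 (n k : ℕ) (hk : 3 ≤ k) (hn : k + 1 ≤ n) :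
    ((lineCutGraph (subdivision (cycleStar k (n - k)))).edgeFinset.card : ℚ) =
      ((n : ℚ) ^ 2 + (k : ℚ) ^ 2 + 11 * n - 7 * k - 2 * n * k + 4) / 2 := by
  obtain ⟨K, rfl⟩ : ∃ K, k = K + 3 := ⟨k - 3, by omega⟩
  obtain ⟨L, hL⟩ : ∃ L, n - (K + 3) = L + 1 := ⟨n - (K + 3) - 1, by omega⟩
  rw [hL]
  have hmain := ZagrebAux.main_count K L
  have hcast : ((lineCutGraph (subdivision (cycleStar (K+3) (L+1)))).edgeFinset.card : ℚ) * 2 =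
      (L:ℚ)^2 + 13*L + 4*K + 28 := by exact_mod_cast congrArg (Nat.cast : ℕ → ℚ) hmain
  have hn : (n : ℚ) = (K:ℚ) + (L:ℚ) + 4 := by
    have : n = K + L + 4 := by omega
    exact_mod_cast congrArg (Nat.cast : ℕ → ℚ) this
  rw [hn]
  push_cast at hcast ⊢
  linear_combination hcast / 2
end
end
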